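/- arXiv:2006.08354 — 3 statements merged into one kernel-verified Lean document; each statement's English description precedes it below -/
import Mathlib

section
/- Let H be a Hilbert C*-module over a unital C*-algebra A, K ∈ End*_A(H), C ∈ GL⁺(H) with KC = CK, R(C^{1/2}) ⊆ R(K*C^{1/2}) where R(K*C^{1/2}) is closed. If F : Ω → H is a continuous C-controlled K-frame with bounds A₀ and B₀, then F is a continuous K-frame for H, i.e. there exist constants a, b > 0 with a⟨K*f,K*f⟩ ≤ ∫_Ω ⟨f,F(w)⟩⟨F(w),f⟩ dμ(w) ≤ b⟨f,f⟩ for all f ∈ H; moreover one may take a = A₀‖C^{-1/2}‖^{-2}‖C^{1/2}‖^{-2} and b = B₀‖C^{-1/2}‖². -/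
open MeasureTheory CStarModule
open scoped RightActions

/-- The Hilbert C⋆-module class as in Mathlib of December 2024 (right `Aᵐᵒᵖ`-action,
`⟪x, y <• a⟫ = ⟪x, y⟫ * a`); Mathlib's `CStarModule` now uses a left action with another
convention. -/
class RightCStarModule (A : outParam <| Type*) (E : Type*) [NonUnitalSemiring A] [StarRing A]
    [Module ℂ A] [AddCommGroup E] [Module ℂ E] [PartialOrder A] [SMul Aᵐᵒᵖ E] [Norm A] [Norm E]
    extends Inner A E where
  inner_add_right {x} {y} {z} : inner x (y + z) = inner x y + inner x z
  inner_self_nonneg {x} : 0 ≤ inner x x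
  inner_self {x} : inner x x = 0 ↔ x = 0
  inner_op_smul_right {a : A} {x y : E} : inner x (y <• a) = inner x y * a
  inner_smul_right_complex {z : ℂ} {x} {y} : inner x (z • y) = z • inner x y
  star_inner x y : star (inner x y) = inner y x
  norm_eq_sqrt_norm_inner_self x : ‖x‖ = √‖inner x x‖

section Stmt7Aux

open Filter

variable {A : Type*} [CStarAlgebra A] [PartialOrder A] [StarOrderedRing A]

private theorem stmt7aux_le_zero_of_tendsto (a : A) (seq : ℕ → ℝ)
    (hseq : Tendsto seq atTop (nhds 0)) (h : ∀ n, a ≤ seq n • 1) : a ≤ 0 := by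
  have h1 : Tendsto (fun n => seq n • (1:A) - a) atTop (nhds (0 - a)) :=
    Tendsto.sub (by simpa using hseq.smul_const (1:A)) tendsto_const_nhds
  have h0 : (0:A) ≤ 0 - a := by
    refine CStarAlgebra.isClosed_nonneg.mem_of_tendsto h1 (Eventually.of_forall fun n => ?_)
    simpa [sub_nonneg] using h n
  simpa using sub_nonneg.mp (by simpa using h0)

private theorem stmt7aux_sa_le_norm_smul_one {a : A} (ha : IsSelfAdjoint a) : a ≤ ‖a‖ • 1 := by
  simpa [Algebra.algebraMap_eq_smul_one] using ha.le_algebraMap_norm_self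

private theorem stmt7aux_sa_smul_real (a : A) (ha : IsSelfAdjoint a) (t : ℝ) :
    IsSelfAdjoint (t • a) := by
  simp [IsSelfAdjoint, star_smul, ha.star_eq]

private theorem stmt7aux_integral_nonneg {Ω : Type*} [MeasurableSpace Ω] {μ : Measure Ω}
    (f : Ω → A) (hf : Integrable f μ) (h : ∀ w, 0 ≤ f w) :
    0 ≤ ∫ w, f w ∂μ := by
  by_contra hc
  have hconv : Convex ℝ {x : A | 0 ≤ x} := by
    intro x hx y hy s t hs ht _
    exact add_nonneg (smul_nonneg hs hx) (smul_nonneg ht hy)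
  obtain ⟨φ, u, hu1, hu2⟩ :=
    geometric_hahn_banach_closed_point hconv CStarAlgebra.isClosed_nonneg hc
  have hφnonpos : ∀ b : A, 0 ≤ b → φ b ≤ 0 := by
    intro b hb
    by_contra hpos
    push_neg at hpos
    obtain ⟨t, ht⟩ := exists_nat_gt (u / φ b)
    have h2 : φ ((t : ℝ) • b) < u := hu1 _ (smul_nonneg (by positivity) hb)
    rw [φ.map_smul] at h2
    simp only [smul_eq_mul] at h2
    have h4 := (div_lt_iff₀ hpos).mp ht
    exact absurd h2 (not_lt.mpr h4.le)
  have hle : φ (∫ w, f w ∂μ) ≤ 0 := by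
    rw [(φ.integral_comp_comm hf).symm]
    exact integral_nonpos fun w => hφnonpos _ (h w)
  have hu0 : 0 < u := by simpa using hu1 0 le_rfl
  exact absurd hu2 (not_lt.mpr (hle.trans hu0.le))

private theorem stmt7aux_moment_engine (W : ℕ → A) (hsa : ∀ m, IsSelfAdjoint (W m)) (K β : ℝ)
    (hβ : 0 ≤ β) (hgrow : ∀ m, ‖W m‖ ≤ K * β ^ m)
    (htri : ∀ m : ℕ, ∀ t : ℝ, 0 ≤ t ^ 2 • W (m + 2) + (2 * t) • W (m + 1) + W m) :
    W 1 ≤ β • W 0 := by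
  have key : ∀ β' : ℝ, β < β' → W 1 - β' • W 0 ≤ 0 := by
    intro β' hβ'
    have hβ'0 : 0 < β' := lt_of_le_of_lt hβ hβ'
    set D : ℕ → A := fun m => W (m + 1) - β' • W m with hDdef
    have step : ∀ m, β' • D m ≤ D (m + 1) := by
      intro m
      have h0 := htri m (-(1 / β'))
      have h1 : (0:A) ≤ (β' ^ 2) •
          ((-(1 / β')) ^ 2 • W (m + 2) + (2 * -(1 / β')) • W (m + 1) + W m) :=
        smul_nonneg (by positivity) h0
      rw [← sub_nonneg]
      have heq : D (m + 1) - β' • D m = (β' ^ 2) •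
          ((-(1 / β')) ^ 2 • W (m + 2) + (2 * -(1 / β')) • W (m + 1) + W m) := by
        simp only [hDdef]
        match_scalars
        · field_simp
        · field_simp; ring
        · field_simp
      rw [heq]; exact h1
    have chain : ∀ n : ℕ, β' ^ n • D 0 ≤ D n := by
      intro n
      induction n with
      | zero => simp
      | succ n ih =>
        calc β' ^ (n + 1) • D 0 = β' • (β' ^ n • D 0) := by
              rw [smul_smul]; ring_nf
          _ ≤ β' • D n := smul_le_smul_of_nonneg_left ih hβ'0.le
          _ ≤ D (n + 1) := step n
    have hD0 : ∀ n : ℕ, D 0 ≤ ((K * (β + β')) * (β / β') ^ n) • 1 := by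
      intro n
      have h2 : D 0 ≤ (β' ^ n)⁻¹ • D n := by
        have := smul_le_smul_of_nonneg_left (chain n) (inv_nonneg.mpr (pow_nonneg hβ'0.le n))
        rwa [smul_smul, inv_mul_cancel₀ (pow_ne_zero n hβ'0.ne'), one_smul] at this
      have hDn : D n ≤ ‖D n‖ • 1 := by
        have hsad : IsSelfAdjoint (D n) :=
          (hsa (n+1)).sub (stmt7aux_sa_smul_real _ (hsa n) β')
        exact stmt7aux_sa_le_norm_smul_one hsad
      have hnorm : ‖D n‖ ≤ K * (β + β') * β ^ n := by
        have h3 : ‖β' • W n‖ = β' * ‖W n‖ := by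
          rw [norm_smul]; simp [abs_of_pos hβ'0]
        calc ‖D n‖ ≤ ‖W (n+1)‖ + ‖β' • W n‖ := norm_sub_le _ _
          _ ≤ K * β ^ (n+1) + β' * (K * β ^ n) := by
              rw [h3]
              exact add_le_add (hgrow (n+1))
                (mul_le_mul_of_nonneg_left (hgrow n) hβ'0.le)
          _ = K * (β + β') * β ^ n := by ring
      calc D 0 ≤ (β' ^ n)⁻¹ • D n := h2
        _ ≤ (β' ^ n)⁻¹ • (‖D n‖ • 1) :=
            smul_le_smul_of_nonneg_left hDn (by positivity)
        _ = ((β' ^ n)⁻¹ * ‖D n‖) • 1 := by rw [smul_smul]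
        _ ≤ ((K * (β + β')) * (β / β') ^ n) • 1 := by
            refine smul_le_smul_of_nonneg_right ?_ zero_le_one
            have h4 : (β' ^ n)⁻¹ * ‖D n‖ ≤ (β' ^ n)⁻¹ * (K * (β + β') * β ^ n) :=
              mul_le_mul_of_nonneg_left hnorm (by positivity)
            refine h4.trans_eq ?_
            rw [div_pow]
            field_simp
    refine stmt7aux_le_zero_of_tendsto _ _ ?_ hD0
    have hr : Tendsto (fun n : ℕ => (β / β') ^ n) atTop (nhds 0) :=
      tendsto_pow_atTop_nhds_zero_of_lt_one (by positivity)
        ((div_lt_one hβ'0).mpr hβ')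
    simpa using hr.const_mul (K * (β + β'))
  rw [← sub_nonpos]
  refine stmt7aux_le_zero_of_tendsto _ (fun n : ℕ => (1 / ((n:ℝ) + 1)) * ‖W 0‖) ?_ ?_
  · simpa using tendsto_one_div_add_atTop_nhds_zero_nat.mul_const ‖W 0‖
  · intro n
    have hβ' : β < β + 1 / ((n:ℝ) + 1) := by
      have : (0:ℝ) < 1 / ((n:ℝ) + 1) := by positivity
      linarith
    have h1 := key _ hβ'
    have hW0 : W 0 ≤ ‖W 0‖ • 1 := stmt7aux_sa_le_norm_smul_one (hsa 0)
    have h2 : W 1 - β • W 0 = (W 1 - (β + 1 / ((n:ℝ) + 1)) • W 0)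
        + (1 / ((n:ℝ) + 1)) • W 0 := by module
    rw [h2]
    calc (W 1 - (β + 1 / ((n:ℝ) + 1)) • W 0) + (1 / ((n:ℝ) + 1)) • W 0
        ≤ 0 + (1 / ((n:ℝ) + 1)) • W 0 := add_le_add_left h1 _
      _ = (1 / ((n:ℝ) + 1)) • W 0 := by rw [zero_add]
      _ ≤ (1 / ((n:ℝ) + 1)) • (‖W 0‖ • 1) :=
          smul_le_smul_of_nonneg_left hW0 (by positivity)
      _ = ((1 / ((n:ℝ) + 1)) * ‖W 0‖) • 1 := by rw [smul_smul]

variable {H : Type*} [NormedAddCommGroup H] [NormedSpace ℂ H] [SMul Aᵐᵒᵖ H]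
  [RightCStarModule A H]

local notation "⟪" x ", " y "⟫" => inner (𝕜 := A) x y

theorem RightCStarModule.inner_add_left {x y z : H} : ⟪x + y, z⟫ = ⟪x, z⟫ + ⟪y, z⟫ := by
  rw [← RightCStarModule.star_inner z, RightCStarModule.inner_add_right, star_add,
    RightCStarModule.star_inner, RightCStarModule.star_inner]

theorem RightCStarModule.inner_sub_right {x y z : H} : ⟪x, y - z⟫ = ⟪x, y⟫ - ⟪x, z⟫ := by
  have := RightCStarModule.inner_add_right (A := A) (x := x) (y := y - z) (z := z)
  rw [sub_add_cancel] at this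
  exact eq_sub_of_add_eq this.symm

theorem RightCStarModule.inner_sub_left {x y z : H} : ⟪x - y, z⟫ = ⟪x, z⟫ - ⟪y, z⟫ := by
  have := RightCStarModule.inner_add_left (A := A) (x := x - y) (y := y) (z := z)
  rw [sub_add_cancel] at this
  exact eq_sub_of_add_eq this.symm

theorem RightCStarModule.inner_smul_left_complex {c : ℂ} {x y : H} :
    ⟪c • x, y⟫ = star c • ⟪x, y⟫ := by
  rw [← RightCStarModule.star_inner y, RightCStarModule.inner_smul_right_complex, star_smul,
    RightCStarModule.star_inner]

theorem RightCStarModule.inner_smul_right_real {r : ℝ} {x y : H} :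
    ⟪x, r • y⟫ = r • ⟪x, y⟫ := by
  rw [← algebraMap_smul ℂ r y, RightCStarModule.inner_smul_right_complex, algebraMap_smul]

theorem RightCStarModule.inner_smul_left_real {r : ℝ} {x y : H} :
    ⟪r • x, y⟫ = r • ⟪x, y⟫ := by
  rw [← RightCStarModule.star_inner y, RightCStarModule.inner_smul_right_real, star_smul,
    RightCStarModule.star_inner, star_trivial]

theorem RightCStarModule.inner_op_smul_left {a : A} {x y : H} :
    ⟪x <• a, y⟫ = star a * ⟪x, y⟫ := by
  rw [← RightCStarModule.star_inner y, RightCStarModule.inner_op_smul_right, star_mul,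
    RightCStarModule.star_inner]

theorem RightCStarModule.isSelfAdjoint_inner_self {x : H} : IsSelfAdjoint ⟪x, x⟫ :=
  RightCStarModule.star_inner x x

theorem RightCStarModule.norm_sq_eq {x : H} : ‖x‖ ^ 2 = ‖⟪x, x⟫‖ := by
  rw [RightCStarModule.norm_eq_sqrt_norm_inner_self (A := A) x, Real.sq_sqrt (norm_nonneg _)]

private theorem stmt7aux_polar_id (g h z : H) :
    ⟪g, z⟫ * ⟪z, h⟫ = (4:ℂ)⁻¹ • ((⟪g + h, z⟫ * ⟪z, g + h⟫)
      + (-Complex.I) • (⟪g + Complex.I • h, z⟫ * ⟪z, g + Complex.I • h⟫)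
      + (-1:ℂ) • (⟪g - h, z⟫ * ⟪z, g - h⟫)
      + Complex.I • (⟪g - Complex.I • h, z⟫ * ⟪z, g - Complex.I • h⟫)) := by
  have hs : ∀ x : H, ⟪z, x⟫ = star ⟪x, z⟫ := fun x => (RightCStarModule.star_inner x z).symm
  rw [hs h, hs (g + h), hs (g + Complex.I • h), hs (g - h), hs (g - Complex.I • h)]
  simp only [RightCStarModule.inner_add_left, RightCStarModule.inner_sub_left,
    RightCStarModule.inner_smul_left_complex, star_add, star_sub,
    star_smul, mul_add, add_mul, mul_sub, sub_mul, smul_mul_assoc, mul_smul_comm, smul_smul,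
    smul_add, smul_sub, RCLike.star_def]
  match_scalars
  all_goals ring_nf
  all_goals try simp [Complex.conj_I]
  all_goals try ring

private theorem stmt7aux_cs_bound (B : H → H → A)
    (hadd_l : ∀ x y z : H, B (x + y) z = B x z + B y z)
    (hadd_r : ∀ x y z : H, B x (y + z) = B x y + B x z)
    (hsmul_la : ∀ (a : A) (x y : H), B (x <• a) y = star a * B x y)
    (hsmul_ra : ∀ (a : A) (x y : H), B x (y <• a) = B x y * a)
    (hstar : ∀ x y : H, star (B x y) = B y x)
    (hpos : ∀ x : H, 0 ≤ B x x)
    (M : ℝ) (hM : 0 ≤ M) (hub : ∀ x : H, ‖B x x‖ ≤ M * (‖x‖ * ‖x‖)) :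
    ∀ x y : H, ‖B x y‖ ≤ M * (‖x‖ * ‖y‖) := by
  intro x y
  have hexp : ∀ s : ℝ, 0 ≤ B y y - (2 * s) • (star (B x y) * B x y)
      + (s * s) • (star (B x y) * (B x x * B x y)) := by
    intro s
    have e0 : ∀ a : A, B (y + x <• a) (y + x <• a)
        = B y y + star (B x y) * a + (star a * B x y + star a * (B x x * a)) := by
      intro a
      rw [hadd_l, hadd_r, hadd_r, hsmul_la, hsmul_la, hsmul_ra, hsmul_ra, ← hstar x y]
    have h0 := hpos (y + x <• ((-s) • B x y))
    rw [e0] at h0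
    have e2 : B y y + star (B x y) * (-s) • B x y +
        (star ((-s) • B x y) * B x y + star ((-s) • B x y) * (B x x * (-s) • B x y))
        = B y y - (2 * s) • (star (B x y) * B x y)
          + (s * s) • (star (B x y) * (B x x * B x y)) := by
      rw [star_smul]
      simp only [mul_smul_comm, smul_mul_assoc, smul_smul, star_trivial]
      module
    rwa [e2] at h0
  have master : ∀ s : ℝ, (2 * s) • (star (B x y) * B x y)
      ≤ B y y + ((s * s) * ‖B x x‖) • (star (B x y) * B x y) := by
    intro s
    have hT : star (B x y) * (B x x * B x y) ≤ ‖B x x‖ • (star (B x y) * B x y) := by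
      rw [← mul_assoc]
      exact CStarAlgebra.star_left_conjugate_le_norm_smul (IsSelfAdjoint.of_nonneg (hpos x))
    have h1 := smul_le_smul_of_nonneg_left hT (mul_self_nonneg s)
    have h2 := hexp s
    have e3 : ∀ u v w : A, 0 ≤ u - v + w → v ≤ u + w := by
      intro u v w h
      rw [← sub_nonneg]
      have : u + w - v = u - v + w := by abel
      rw [this]; exact h
    have h3 := e3 _ _ _ h2
    refine h3.trans ?_
    refine add_le_add_right ?_ _
    exact h1.trans_eq (smul_smul _ _ _)
  have key : star (B x y) * B x y ≤ ‖B x x‖ • B y y := by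
    rcases eq_or_lt_of_le (norm_nonneg (B x x)) with hn0 | hnpos
    · have hbb : star (B x y) * B x y ≤ 0 := by
        have hstep : ∀ k : ℕ, star (B x y) * B x y ≤ ((1 / ((k:ℝ)+1)) * ‖B y y‖) • 1 := by
          intro k
          have h0 := master ((k:ℝ)+1)
          rw [← hn0, mul_zero, zero_smul, add_zero] at h0
          have hk : (0:ℝ) < (k:ℝ) + 1 := by positivity
          have h1 := smul_le_smul_of_nonneg_left h0
            (le_of_lt (by positivity : (0:ℝ) < (2 * ((k:ℝ)+1))⁻¹))
          rw [smul_smul, inv_mul_cancel₀ (by positivity), one_smul] at h1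
          refine h1.trans ?_
          have h2 := smul_le_smul_of_nonneg_left
            (stmt7aux_sa_le_norm_smul_one (IsSelfAdjoint.of_nonneg (hpos y)))
            (le_of_lt (by positivity : (0:ℝ) < (2 * ((k:ℝ)+1))⁻¹))
          rw [smul_smul] at h2
          refine h2.trans ?_
          refine smul_le_smul_of_nonneg_right ?_ zero_le_one
          rw [one_div]
          have h5 : (2 * ((k:ℝ)+1))⁻¹ ≤ ((k:ℝ)+1)⁻¹ := by
            apply inv_anti₀ hk
            nlinarith
          nlinarith [norm_nonneg (B y y), h5]
        refine stmt7aux_le_zero_of_tendsto _ _ ?_ hstep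
        simpa using tendsto_one_div_add_atTop_nhds_zero_nat.mul_const ‖B y y‖
      rw [← hn0, zero_smul]
      exact hbb
    · have h0 := master ‖B x x‖⁻¹
      have e4 : ‖B x x‖⁻¹ * ‖B x x‖⁻¹ * ‖B x x‖ = ‖B x x‖⁻¹ := by
        field_simp
      rw [e4] at h0
      have h5 : ‖B x x‖⁻¹ • (star (B x y) * B x y) ≤ B y y := by
        rw [← sub_nonneg]
        have e5 : B y y - ‖B x x‖⁻¹ • (star (B x y) * B x y)
            = B y y + ‖B x x‖⁻¹ • (star (B x y) * B x y)
              - (2 * ‖B x x‖⁻¹) • (star (B x y) * B x y) := by module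
        rw [e5, sub_nonneg]
        exact h0
      have h6 := smul_le_smul_of_nonneg_left h5 hnpos.le
      rwa [smul_smul, mul_inv_cancel₀ hnpos.ne', one_smul] at h6
  have h9 : ‖star (B x y) * B x y‖ ≤ ‖B x x‖ * ‖B y y‖ := by
    have := CStarAlgebra.norm_le_norm_of_nonneg_of_le (star_mul_self_nonneg _) key
    refine this.trans ?_
    rw [norm_smul]
    simp [abs_of_nonneg (norm_nonneg (B x x))]
  have h10 : ‖B x y‖ * ‖B x y‖ ≤ (M * (‖x‖ * ‖x‖)) * (M * (‖y‖ * ‖y‖)) := by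
    have hbb : ‖star (B x y) * B x y‖ = ‖B x y‖ * ‖B x y‖ := CStarRing.norm_star_mul_self
    have := h9.trans (mul_le_mul (hub x) (hub y) (norm_nonneg _) (by positivity))
    rwa [hbb] at this
  nlinarith [h10, mul_nonneg hM (mul_nonneg (norm_nonneg x) (norm_nonneg y)),
    norm_nonneg (B x y), sq_nonneg (‖B x y‖ - M * (‖x‖ * ‖y‖)),
    sq_nonneg (‖B x y‖ + M * (‖x‖ * ‖y‖))]

theorem RightCStarModule.norm_inner_le (H' : Type*) [NormedAddCommGroup H'] [NormedSpace ℂ H']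
    [SMul Aᵐᵒᵖ H'] [RightCStarModule A H'] {x y : H'} :
    ‖inner (𝕜 := A) x y‖ ≤ ‖x‖ * ‖y‖ := by
  have := stmt7aux_cs_bound (A := A) (H := H') (fun x y => inner (𝕜 := A) x y)
    (fun x y z => RightCStarModule.inner_add_left)
    (fun x y z => RightCStarModule.inner_add_right)
    (fun a x y => RightCStarModule.inner_op_smul_left)
    (fun a x y => RightCStarModule.inner_op_smul_right)
    (fun x y => RightCStarModule.star_inner x y)
    (fun x => RightCStarModule.inner_self_nonneg) 1 zero_le_one
    (fun x => by rw [one_mul, ← RightCStarModule.norm_sq_eq, pow_two]) x y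
  simpa using this

private theorem stmt7aux_gen_moment (C Cinv : H →L[ℂ] H)
    (hCinv₁ : C.comp Cinv = 1) (hCinv₂ : Cinv.comp C = 1)
    (J : H → H → A)
    (hadd_l : ∀ x y z : H, J (x + y) z = J x z + J y z)
    (hadd_r : ∀ x y z : H, J x (y + z) = J x y + J x z)
    (hsmul_l : ∀ (t : ℝ) (x y : H), J (t • x) y = t • J x y)
    (hsmul_r : ∀ (t : ℝ) (x y : H), J x (t • y) = t • J x y)
    (hstar : ∀ x y : H, star (J x y) = J y x)
    (hmove : ∀ x y : H, J (C x) y = J x (C y))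
    (hdiag : ∀ x : H, 0 ≤ J x x)
    (hCdiag : ∀ x : H, 0 ≤ J (C x) x)
    (M : ℝ) (hM : 0 ≤ M) (hnorm : ∀ x y : H, ‖J (C x) y‖ ≤ M * (‖x‖ * ‖y‖))
    (f : H) :
    J f f ≤ ‖Cinv‖ • J (C f) f ∧ (0 < ‖C‖ → J (C f) f ≤ ‖C‖ • J f f) := by
  have hmul : ∀ S T : H →L[ℂ] H, S * T = S.comp T := fun _ _ => rfl
  have hCCinv : ∀ x : H, C (Cinv x) = x := fun x => by
    have := DFunLike.congr_fun hCinv₁ x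
    simpa using this
  have hCinvC : ∀ x : H, Cinv (C x) = x := fun x => by
    have := DFunLike.congr_fun hCinv₂ x
    simpa using this
  have hcomm : Commute C Cinv := by
    unfold Commute SemiconjBy
    rw [hmul, hmul, hCinv₁, hCinv₂]
  have hpownorm : ∀ (T : H →L[ℂ] H) (k : ℕ) (x : H), ‖(T ^ k) x‖ ≤ ‖T‖ ^ k * ‖x‖ := by
    intro T k
    induction k with
    | zero => intro x; simp
    | succ k ih =>
      intro x
      have h1 : (T ^ (k+1)) x = (T ^ k) (T x) := by
        rw [pow_succ, hmul, ContinuousLinearMap.comp_apply]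
      rw [h1]
      calc ‖(T ^ k) (T x)‖ ≤ ‖T‖ ^ k * ‖T x‖ := ih (T x)
        _ ≤ ‖T‖ ^ k * (‖T‖ * ‖x‖) := by
            have := T.le_opNorm x
            have h2 : (0:ℝ) ≤ ‖T‖ ^ k := by positivity
            nlinarith [this, h2]
        _ = ‖T‖ ^ (k+1) * ‖x‖ := by ring
  have hmoveInv : ∀ x y : H, J (Cinv x) y = J x (Cinv y) := by
    intro x y
    have := hmove (Cinv x) (Cinv y)
    rw [hCCinv x, hCCinv y] at this
    exact this.symm
  have hmovePow : ∀ (k : ℕ) (x y : H), J ((Cinv ^ k) x) y = J x ((Cinv ^ k) y) := by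
    intro k
    induction k with
    | zero => intro x y; simp
    | succ k ih =>
      intro x y
      have e1 : ∀ z : H, (Cinv ^ (k+1)) z = (Cinv ^ k) (Cinv z) := fun z => by
        rw [pow_succ, hmul, ContinuousLinearMap.comp_apply]
      have e2 : ∀ z : H, (Cinv ^ (k+1)) z = Cinv ((Cinv ^ k) z) := fun z => by
        rw [pow_succ', hmul, ContinuousLinearMap.comp_apply]
      rw [e1 x, ih (Cinv x) y, hmoveInv, ← e2 y]
  have hmovePowC : ∀ (k : ℕ) (x y : H), J ((C ^ k) x) y = J x ((C ^ k) y) := by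
    intro k
    induction k with
    | zero => intro x y; simp
    | succ k ih =>
      intro x y
      have e1 : ∀ z : H, (C ^ (k+1)) z = (C ^ k) (C z) := fun z => by
        rw [pow_succ, hmul, ContinuousLinearMap.comp_apply]
      have e2 : ∀ z : H, (C ^ (k+1)) z = C ((C ^ k) z) := fun z => by
        rw [pow_succ', hmul, ContinuousLinearMap.comp_apply]
      rw [e1 x, ih (C x) y, hmove, ← e2 y]
  have hbil : ∀ (t : ℝ) (x y x' y' : H), J (t • x + y) (t • x' + y')
      = t ^ 2 • J x x' + t • J x y' + t • J y x' + J y y' := by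
    intro t x y x' y'
    rw [hadd_l, hsmul_l, hadd_r, hadd_r, hsmul_r, hsmul_r, smul_add, smul_smul]
    module
  have hCmulCinv : C * Cinv = 1 := hCinv₁
  have hop1 : ∀ (i j : ℕ) (x : H), (Cinv ^ j) (C ((Cinv ^ i) x)) = C ((Cinv ^ (i + j)) x) := by
    intro i j x
    have hcj : Commute (Cinv ^ j) C := (hcomm.symm.pow_left j)
    have hopeq : Cinv ^ j * (C * Cinv ^ i) = C * Cinv ^ (i + j) := by
      calc Cinv ^ j * (C * Cinv ^ i) = (Cinv ^ j * C) * Cinv ^ i := by rw [mul_assoc]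
        _ = (C * Cinv ^ j) * Cinv ^ i := by rw [hcj.eq]
        _ = C * (Cinv ^ j * Cinv ^ i) := by rw [mul_assoc]
        _ = C * Cinv ^ (i + j) := by rw [← pow_add, Nat.add_comm j i]
    have := DFunLike.congr_fun hopeq x
    simpa [ContinuousLinearMap.mul_apply] using this
  have hop2 : ∀ (s : ℕ) (x : H), C ((Cinv ^ (s + 1)) x) = (Cinv ^ s) x := by
    intro s x
    have hopeq : C * Cinv ^ (s + 1) = Cinv ^ s := by
      rw [pow_succ', ← mul_assoc, hCmulCinv, one_mul]
    have := DFunLike.congr_fun hopeq x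
    simpa [ContinuousLinearMap.mul_apply] using this
  have hop3 : ∀ (i j : ℕ) (x : H), (Cinv ^ j) ((Cinv ^ i) x) = (Cinv ^ (i + j)) x := by
    intro i j x
    have hopeq : Cinv ^ j * Cinv ^ i = Cinv ^ (i + j) := by
      rw [← pow_add, Nat.add_comm j i]
    have := DFunLike.congr_fun hopeq x
    simpa [ContinuousLinearMap.mul_apply] using this
  set W : ℕ → A := fun k => J (C ((Cinv ^ k) f)) f with hWdef
  have rep1 : ∀ i j : ℕ, J (C ((Cinv ^ i) f)) ((Cinv ^ j) f) = W (i + j) := by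
    intro i j
    rw [← hmovePow j (C ((Cinv ^ i) f)) f, hop1]
  have rep2 : ∀ i j : ℕ, J ((Cinv ^ i) f) ((Cinv ^ j) f) = W (i + j + 1) := by
    intro i j
    rw [← hmovePow j ((Cinv ^ i) f) f, hop3, ← hop2 (i + j) f]
  have hsaW : ∀ m, IsSelfAdjoint (W m) := by
    intro m
    show star (W m) = W m
    have e1 : star (W m) = J f (C ((Cinv ^ m) f)) := hstar _ _
    rw [e1, ← hmove f ((Cinv ^ m) f), ← hmovePow m (C f) f]
    show J ((Cinv ^ m) (C f)) f = W m
    have e2 : (Cinv ^ m) (C f) = C ((Cinv ^ m) f) := by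
      have := hop1 0 m f
      simpa using this
    rw [e2]
  have htriW : ∀ (m : ℕ) (t : ℝ), 0 ≤ t ^ 2 • W (m + 2) + (2 * t) • W (m + 1) + W m := by
    intro m t
    rcases Nat.even_or_odd m with ⟨a, ha⟩ | ⟨a, ha⟩
    · subst ha
      have h0 := hCdiag (t • ((Cinv ^ (a + 1)) f) + (Cinv ^ a) f)
      rw [map_add, ContinuousLinearMap.map_smul_of_tower, hbil,
        rep1 (a+1) (a+1), rep1 (a+1) a, rep1 a (a+1), rep1 a a] at h0
      have e1 : (a+1) + (a+1) = a + a + 2 := by omega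
      have e2 : (a+1) + a = a + a + 1 := by omega
      have e3 : a + (a+1) = a + a + 1 := by omega
      rw [e1, e2, e3] at h0
      have e4 : t ^ 2 • W (a + a + 2) + (2 * t) • W (a + a + 1) + W (a + a)
          = t ^ 2 • W (a + a + 2) + t • W (a + a + 1) + t • W (a + a + 1) + W (a + a) := by
        module
      rw [e4]; exact h0
    · subst ha
      have h0 := hdiag (t • ((Cinv ^ (a + 1)) f) + (Cinv ^ a) f)
      rw [hbil, rep2 (a+1) (a+1), rep2 (a+1) a, rep2 a (a+1), rep2 a a] at h0
      have e1 : (a+1) + (a+1) + 1 = 2 * a + 1 + 2 := by omega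
      have e2 : (a+1) + a + 1 = 2 * a + 1 + 1 := by omega
      have e3 : a + (a+1) + 1 = 2 * a + 1 + 1 := by omega
      have e4 : a + a + 1 = 2 * a + 1 := by omega
      rw [e1, e2, e3, e4] at h0
      have e5 : t ^ 2 • W (2 * a + 1 + 2) + (2 * t) • W (2 * a + 1 + 1) + W (2 * a + 1)
          = t ^ 2 • W (2 * a + 1 + 2) + t • W (2 * a + 1 + 1) + t • W (2 * a + 1 + 1)
            + W (2 * a + 1) := by module
      rw [e5]; exact h0
  have hgrowW : ∀ k, ‖W k‖ ≤ (M * (‖f‖ * ‖f‖)) * ‖Cinv‖ ^ k := by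
    intro k
    calc ‖W k‖ ≤ M * (‖(Cinv ^ k) f‖ * ‖f‖) := hnorm _ f
      _ ≤ M * ((‖Cinv‖ ^ k * ‖f‖) * ‖f‖) := by
          have h1 := hpownorm Cinv k f
          have h2 : (0:ℝ) ≤ ‖f‖ := norm_nonneg f
          exact mul_le_mul_of_nonneg_left (mul_le_mul_of_nonneg_right h1 h2) hM
      _ = (M * (‖f‖ * ‖f‖)) * ‖Cinv‖ ^ k := by ring
  have hW1 := stmt7aux_moment_engine W hsaW (M * (‖f‖ * ‖f‖)) ‖Cinv‖ (norm_nonneg Cinv)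
    hgrowW htriW
  constructor
  · have e1 : W 1 = J f f := by
      show J (C ((Cinv ^ 1) f)) f = J f f
      rw [pow_one, hCCinv]
    have e2 : W 0 = J (C f) f := by
      show J (C ((Cinv ^ 0) f)) f = J (C f) f
      norm_num
    rwa [e1, e2] at hW1
  · intro hC0
    have hop1C : ∀ (i j : ℕ) (x : H), (C ^ j) ((C ^ i) x) = (C ^ (i + j)) x := by
      intro i j x
      have hopeq : C ^ j * C ^ i = C ^ (i + j) := by rw [← pow_add, Nat.add_comm j i]
      have := DFunLike.congr_fun hopeq x
      simpa [ContinuousLinearMap.mul_apply] using this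
    have hop2C : ∀ (i j : ℕ) (x : H), (C ^ j) (C ((C ^ i) x)) = (C ^ (i + j + 1)) x := by
      intro i j x
      have hopeq : C ^ j * (C * C ^ i) = C ^ (i + j + 1) := by
        rw [← pow_succ', ← pow_add]
        congr 1
        omega
      have := DFunLike.congr_fun hopeq x
      simpa [ContinuousLinearMap.mul_apply] using this
    set X : ℕ → A := fun k => J ((C ^ k) f) f with hXdef
    have repX1 : ∀ i j : ℕ, J ((C ^ i) f) ((C ^ j) f) = X (i + j) := by
      intro i j
      rw [← hmovePowC j ((C ^ i) f) f, hop1C]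
    have repX2 : ∀ i j : ℕ, J (C ((C ^ i) f)) ((C ^ j) f) = X (i + j + 1) := by
      intro i j
      rw [← hmovePowC j (C ((C ^ i) f)) f, hop2C]
    have hsaX : ∀ m, IsSelfAdjoint (X m) := by
      intro m
      show star (X m) = X m
      rw [hstar, ← hmovePowC m f f]
    have htriX : ∀ (m : ℕ) (t : ℝ), 0 ≤ t ^ 2 • X (m + 2) + (2 * t) • X (m + 1) + X m := by
      intro m t
      rcases Nat.even_or_odd m with ⟨a, ha⟩ | ⟨a, ha⟩
      · subst ha
        have h0 := hdiag (t • ((C ^ (a + 1)) f) + (C ^ a) f)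
        rw [hbil, repX1 (a+1) (a+1), repX1 (a+1) a, repX1 a (a+1), repX1 a a] at h0
        have e1 : (a+1) + (a+1) = a + a + 2 := by omega
        have e2 : (a+1) + a = a + a + 1 := by omega
        have e3 : a + (a+1) = a + a + 1 := by omega
        rw [e1, e2, e3] at h0
        have e4 : t ^ 2 • X (a + a + 2) + (2 * t) • X (a + a + 1) + X (a + a)
            = t ^ 2 • X (a + a + 2) + t • X (a + a + 1) + t • X (a + a + 1) + X (a + a) := by
          module
        rw [e4]; exact h0
      · subst ha
        have h0 := hCdiag (t • ((C ^ (a + 1)) f) + (C ^ a) f)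
        rw [map_add, ContinuousLinearMap.map_smul_of_tower, hbil,
          repX2 (a+1) (a+1), repX2 (a+1) a, repX2 a (a+1), repX2 a a] at h0
        have e1 : (a+1) + (a+1) + 1 = 2 * a + 1 + 2 := by omega
        have e2 : (a+1) + a + 1 = 2 * a + 1 + 1 := by omega
        have e3 : a + (a+1) + 1 = 2 * a + 1 + 1 := by omega
        have e4 : a + a + 1 = 2 * a + 1 := by omega
        rw [e1, e2, e3, e4] at h0
        have e5 : t ^ 2 • X (2 * a + 1 + 2) + (2 * t) • X (2 * a + 1 + 1) + X (2 * a + 1)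
            = t ^ 2 • X (2 * a + 1 + 2) + t • X (2 * a + 1 + 1) + t • X (2 * a + 1 + 1)
              + X (2 * a + 1) := by module
        rw [e5]; exact h0
    have hgrowX : ∀ k, ‖X k‖
        ≤ ((M * (‖f‖ * ‖f‖)) * (‖Cinv‖ + 1) * (1 + ‖C‖⁻¹)) * ‖C‖ ^ k := by
      intro k
      have hf2 : (0:ℝ) ≤ ‖f‖ * ‖f‖ := mul_nonneg (norm_nonneg f) (norm_nonneg f)
      have hCi : (0:ℝ) ≤ ‖C‖⁻¹ := by positivity
      have hCinvn : (0:ℝ) ≤ ‖Cinv‖ := norm_nonneg Cinv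
      cases k with
      | zero =>
        have e0 : X 0 = J (C (Cinv f)) f := by
          show J ((C ^ 0) f) f = _
          rw [hCCinv]
          norm_num
        rw [e0, pow_zero, mul_one]
        calc ‖J (C (Cinv f)) f‖ ≤ M * (‖Cinv f‖ * ‖f‖) := hnorm _ _
          _ ≤ M * ((‖Cinv‖ * ‖f‖) * ‖f‖) := by
              have h1 := Cinv.le_opNorm f
              have h2 : (0:ℝ) ≤ ‖f‖ := norm_nonneg f
              exact mul_le_mul_of_nonneg_left (mul_le_mul_of_nonneg_right h1 h2) hM
          _ ≤ (M * (‖f‖ * ‖f‖)) * (‖Cinv‖ + 1) * (1 + ‖C‖⁻¹) := by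
              nlinarith [mul_nonneg hM hf2, mul_nonneg (mul_nonneg hM hf2) hCi,
                mul_nonneg (mul_nonneg (mul_nonneg hM hf2) hCi) hCinvn]
      | succ k =>
        have e0 : X (k + 1) = J (C ((C ^ k) f)) f := by
          show J ((C ^ (k+1)) f) f = _
          have h1 : (C ^ (k + 1)) f = C ((C ^ k) f) := by
            have hopeq : C ^ (k+1) = C * C ^ k := pow_succ' C k
            have := DFunLike.congr_fun hopeq f
            simpa [ContinuousLinearMap.mul_apply] using this
          rw [h1]
        rw [e0]
        have hC1 : ‖C‖⁻¹ * ‖C‖ = 1 := inv_mul_cancel₀ hC0.ne'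
        have hpk : (0:ℝ) ≤ ‖C‖ ^ k := by positivity
        calc ‖J (C ((C ^ k) f)) f‖ ≤ M * (‖(C ^ k) f‖ * ‖f‖) := hnorm _ _
          _ ≤ M * ((‖C‖ ^ k * ‖f‖) * ‖f‖) := by
              have h1 := hpownorm C k f
              have h2 : (0:ℝ) ≤ ‖f‖ := norm_nonneg f
              exact mul_le_mul_of_nonneg_left (mul_le_mul_of_nonneg_right h1 h2) hM
          _ = (M * (‖f‖ * ‖f‖)) * ‖C‖ ^ k := by ring
          _ ≤ ((M * (‖f‖ * ‖f‖)) * (‖Cinv‖ + 1) * (1 + ‖C‖⁻¹)) * ‖C‖ ^ (k + 1) := by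
              have hMf : (0:ℝ) ≤ M * (‖f‖ * ‖f‖) := mul_nonneg hM hf2
              have key : M * (‖f‖ * ‖f‖)
                  ≤ ((M * (‖f‖ * ‖f‖)) * (‖Cinv‖ + 1) * (1 + ‖C‖⁻¹)) * ‖C‖ := by
                have e1 : ((M * (‖f‖ * ‖f‖)) * (‖Cinv‖ + 1) * (1 + ‖C‖⁻¹)) * ‖C‖
                    = (M * (‖f‖ * ‖f‖)) * ((‖Cinv‖ + 1) * (‖C‖ + ‖C‖⁻¹ * ‖C‖)) := by ring
                rw [e1, hC1]
                nlinarith [mul_nonneg hM hf2, hC0.le, hCinvn,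
                  mul_nonneg (mul_nonneg hM hf2) (mul_nonneg hCinvn hC0.le),
                  mul_nonneg (mul_nonneg hM hf2) hCinvn,
                  mul_nonneg (mul_nonneg hM hf2) hC0.le]
              calc (M * (‖f‖ * ‖f‖)) * ‖C‖ ^ k
                  ≤ (((M * (‖f‖ * ‖f‖)) * (‖Cinv‖ + 1) * (1 + ‖C‖⁻¹)) * ‖C‖) * ‖C‖ ^ k :=
                    mul_le_mul_of_nonneg_right key hpk
                _ = ((M * (‖f‖ * ‖f‖)) * (‖Cinv‖ + 1) * (1 + ‖C‖⁻¹)) * ‖C‖ ^ (k + 1) := by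
                    ring
    have hX1 := stmt7aux_moment_engine X hsaX _ ‖C‖ (norm_nonneg C) hgrowX htriX
    have e1 : X 1 = J (C f) f := by
      show J ((C ^ 1) f) f = _
      rw [pow_one]
    have e2 : X 0 = J f f := by
      show J ((C ^ 0) f) f = _
      norm_num
    rwa [e1, e2] at hX1

end Stmt7Aux

set_option maxHeartbeats 2000000 in
/-- Under `KC = CK` and the range condition `R(C^{1/2}) ⊆ R(K* C^{1/2})`
(closed), a continuous `C`-controlled `K`-frame with bounds `A₀, B₀` is a continuous `K`-frame
with bounds `a = A₀ ‖C^{-1/2}‖⁻² ‖C^{1/2}‖⁻²` and `b = B₀ ‖C^{-1/2}‖²`. -/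
theorem stmt7
    {A : Type*} [CStarAlgebra A] [PartialOrder A] [StarOrderedRing A]
    {H : Type*} [NormedAddCommGroup H] [NormedSpace ℂ H] [SMul Aᵐᵒᵖ H]
    [RightCStarModule A H] [CompleteSpace H]
    {Ω : Type*} [MeasurableSpace Ω] (μ : Measure Ω)
    -- `K ∈ End*_A(H)` with adjoint `Ks`
    (K Ks : H →L[ℂ] H)
    (hK : ∀ x y : H, inner (𝕜 := A) (K x) y = inner (𝕜 := A) x (Ks y))
    -- `C ∈ GL⁺(H)`, square roots `C^{1/2}` and `C^{-1/2}`
    (C Cinv Chalf Cinvhalf : H →L[ℂ] H)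
    (hCinv₁ : C.comp Cinv = 1) (hCinv₂ : Cinv.comp C = 1)
    (hCsa : ∀ x y : H, inner (𝕜 := A) (C x) y = inner (𝕜 := A) x (C y))
    (hCpos : ∀ x : H, (0 : A) ≤ inner (𝕜 := A) x (C x))
    (hChalf : Chalf.comp Chalf = C)
    (hChalfsa : ∀ x y : H, inner (𝕜 := A) (Chalf x) y = inner (𝕜 := A) x (Chalf y))
    (hChalfpos : ∀ x : H, (0 : A) ≤ inner (𝕜 := A) x (Chalf x))
    (hCinvhalf : Cinvhalf.comp Cinvhalf = Cinv)
    (hCinvhalfsa : ∀ x y : H, inner (𝕜 := A) (Cinvhalf x) y = inner (𝕜 := A) x (Cinvhalf y))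
    (hCinvhalfpos : ∀ x : H, (0 : A) ≤ inner (𝕜 := A) x (Cinvhalf x))
    -- `KC = CK` and the range condition
    (hCK : K.comp C = C.comp K)
    (hrange : Set.range Chalf ⊆ Set.range (Ks.comp Chalf))
    (hclosed : IsClosed (Set.range (Ks.comp Chalf)))
    -- `F` is a continuous `C`-controlled `K`-frame with bounds `A₀, B₀`
    (F : Ω → H)
    (hFmeas : ∀ f : H, StronglyMeasurable fun w => inner (𝕜 := A) f (F w))
    (hFint : ∀ f : H,
      Integrable (fun w => inner (𝕜 := A) f (F w) * inner (𝕜 := A) (F w) f) μ)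
    (A₀ B₀ : ℝ) (hA₀ : 0 < A₀) (hB₀ : 0 < B₀)
    (hframe : ∀ f : H,
      A₀ • inner (𝕜 := A) (Chalf (Ks f)) (Chalf (Ks f))
          ≤ (∫ w, inner (𝕜 := A) f (C (F w)) * inner (𝕜 := A) (F w) f ∂μ) ∧
      (∫ w, inner (𝕜 := A) f (C (F w)) * inner (𝕜 := A) (F w) f ∂μ)
          ≤ B₀ • inner (𝕜 := A) f f) :
    -- `F` is a continuous `K`-frame with the indicated bounds
    ∀ f : H,
      (A₀ / (‖Cinvhalf‖ ^ 2 * ‖Chalf‖ ^ 2)) • inner (𝕜 := A) (Ks f) (Ks f)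
          ≤ (∫ w, inner (𝕜 := A) f (F w) * inner (𝕜 := A) (F w) f ∂μ) ∧
      (∫ w, inner (𝕜 := A) f (F w) * inner (𝕜 := A) (F w) f ∂μ)
          ≤ (B₀ * ‖Cinvhalf‖ ^ 2) • inner (𝕜 := A) f f := by
  classical
  rcases subsingleton_or_nontrivial H with hsub | hnt
  · intro f
    have hz : ∀ x y : H, inner (𝕜 := A) x y = 0 := by
      intro x y
      rw [Subsingleton.elim x 0, Subsingleton.elim y 0]
      exact RightCStarModule.inner_self.mpr rfl
    constructor <;> simp [hz]
  -- Notation: the frame transform bilinear form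
  set J : H → H → A := fun g h => ∫ w, inner (𝕜 := A) g (F w) * inner (𝕜 := A) (F w) h ∂μ
    with hJdef
  -- Integrability for all pairs via polarization
  have hItg : ∀ g h : H,
      Integrable (fun w => inner (𝕜 := A) g (F w) * inner (𝕜 := A) (F w) h) μ := by
    intro g h
    have hpt : (fun w => inner (𝕜 := A) g (F w) * inner (𝕜 := A) (F w) h)
        = fun w => (4:ℂ)⁻¹ •
          ((inner (𝕜 := A) (g + h) (F w) * inner (𝕜 := A) (F w) (g + h))
          + (-Complex.I) • (inner (𝕜 := A) (g + Complex.I • h) (F w)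
              * inner (𝕜 := A) (F w) (g + Complex.I • h))
          + (-1:ℂ) • (inner (𝕜 := A) (g - h) (F w) * inner (𝕜 := A) (F w) (g - h))
          + Complex.I • (inner (𝕜 := A) (g - Complex.I • h) (F w)
              * inner (𝕜 := A) (F w) (g - Complex.I • h))) := by
      funext w
      exact stmt7aux_polar_id g h (F w)
    rw [hpt]
    exact ((((hFint _).add ((hFint _).smul (-Complex.I))).add ((hFint _).smul ((-1:ℂ)))).add
      ((hFint _).smul Complex.I)).smul ((4:ℂ)⁻¹)
  -- Basic algebraic properties of J
  have hJa_l : ∀ x y z : H, J (x + y) z = J x z + J y z := by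
    intro x y z
    simp only [hJdef]
    rw [← integral_add (hItg x z) (hItg y z)]
    congr 1; funext w
    rw [RightCStarModule.inner_add_left, add_mul]
  have hJa_r : ∀ x y z : H, J x (y + z) = J x y + J x z := by
    intro x y z
    simp only [hJdef]
    rw [← integral_add (hItg x y) (hItg x z)]
    congr 1; funext w
    rw [RightCStarModule.inner_add_right, mul_add]
  have hJs_lC : ∀ (c : ℂ) (x y : H), J (c • x) y = star c • J x y := by
    intro c x y
    simp only [hJdef]
    rw [← integral_smul]
    congr 1; funext w
    rw [RightCStarModule.inner_smul_left_complex, smul_mul_assoc]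
  have hJs_rC : ∀ (c : ℂ) (x y : H), J x (c • y) = c • J x y := by
    intro c x y
    simp only [hJdef]
    rw [← integral_smul]
    congr 1; funext w
    rw [RightCStarModule.inner_smul_right_complex, mul_smul_comm]
  have hJs_l : ∀ (t : ℝ) (x y : H), J (t • x) y = t • J x y := by
    intro t x y
    simp only [hJdef]
    rw [← integral_smul]
    congr 1; funext w
    rw [RightCStarModule.inner_smul_left_real, smul_mul_assoc]
  have hJs_r : ∀ (t : ℝ) (x y : H), J x (t • y) = t • J x y := by
    intro t x y
    simp only [hJdef]
    rw [← integral_smul]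
    congr 1; funext w
    rw [RightCStarModule.inner_smul_right_real, mul_smul_comm]
  have hJstar : ∀ x y : H, star (J x y) = J y x := by
    intro x y
    simp only [hJdef]
    have h1 : star (∫ w, inner (𝕜 := A) x (F w) * inner (𝕜 := A) (F w) y ∂μ)
        = ∫ w, star (inner (𝕜 := A) x (F w) * inner (𝕜 := A) (F w) y) ∂μ := by
      have := (starL' ℝ (A := A)).toContinuousLinearMap.integral_comp_comm (hItg x y)
      simpa using this.symm
    rw [h1]
    congr 1; funext w
    rw [star_mul, RightCStarModule.star_inner, RightCStarModule.star_inner]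
  have hJop_l : ∀ (a : A) (u y : H), J (u <• a) y = star a * J u y := by
    intro a u y
    simp only [hJdef]
    have e : (fun w => inner (𝕜 := A) (u <• a) (F w) * inner (𝕜 := A) (F w) y)
        = fun w => star a * (inner (𝕜 := A) u (F w) * inner (𝕜 := A) (F w) y) := by
      funext w
      rw [RightCStarModule.inner_op_smul_left, mul_assoc]
    rw [e]
    have := ((ContinuousLinearMap.mul ℂ A) (star a)).integral_comp_comm (hItg u y)
    simpa using this
  have hJop_r : ∀ (a : A) (u y : H), J u (y <• a) = J u y * a := by
    intro a u y
    simp only [hJdef]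
    have e : (fun w => inner (𝕜 := A) u (F w) * inner (𝕜 := A) (F w) (y <• a))
        = fun w => (inner (𝕜 := A) u (F w) * inner (𝕜 := A) (F w) y) * a := by
      funext w
      rw [RightCStarModule.inner_op_smul_right, mul_assoc]
    rw [e]
    have := (((ContinuousLinearMap.mul ℂ A).flip a).integral_comp_comm (hItg u y))
    simpa using this
  -- Identification with the controlled-frame integral
  have hJCx : ∀ x : H, (∫ w, inner (𝕜 := A) x (C (F w)) * inner (𝕜 := A) (F w) x ∂μ)
      = J (C x) x := by
    intro x
    simp only [hJdef]
    congr 1; funext w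
    rw [← hCsa]
  have hframe1 : ∀ x : H,
      A₀ • inner (𝕜 := A) (Chalf (Ks x)) (Chalf (Ks x)) ≤ J (C x) x := by
    intro x
    have := (hframe x).1
    rwa [hJCx x] at this
  have hframe2 : ∀ x : H, J (C x) x ≤ B₀ • inner (𝕜 := A) x x := by
    intro x
    have := (hframe x).2
    rwa [hJCx x] at this
  have hCdiagJ : ∀ x : H, 0 ≤ J (C x) x := by
    intro x
    refine le_trans ?_ (hframe1 x)
    exact smul_nonneg hA₀.le RightCStarModule.inner_self_nonneg
  have hdiagJ : ∀ x : H, 0 ≤ J x x := by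
    intro x
    apply stmt7aux_integral_nonneg _ (hItg x x)
    intro w
    have e : inner (𝕜 := A) (F w) x = star (inner (𝕜 := A) x (F w)) := (RightCStarModule.star_inner _ _).symm
    rw [e]
    exact mul_star_self_nonneg _
  have hsaJC : ∀ x : H, IsSelfAdjoint (J (C x) x) := by
    intro x
    have h1 : IsSelfAdjoint (J (C x) x - A₀ • inner (𝕜 := A) (Chalf (Ks x)) (Chalf (Ks x))) :=
      IsSelfAdjoint.of_nonneg (sub_nonneg.mpr (hframe1 x))
    have h2 : IsSelfAdjoint (A₀ • inner (𝕜 := A) (Chalf (Ks x)) (Chalf (Ks x))) :=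
      stmt7aux_sa_smul_real _ RightCStarModule.isSelfAdjoint_inner_self A₀
    simpa using h1.add h2
  -- The commutation of C with J
  have hmoveJ : ∀ x y : H, J (C x) y = J x (C y) := by
    have hdiag0 : ∀ z : H, J (C z) z - star (J (C z) z) = 0 := fun z =>
      sub_eq_zero_of_eq ((hsaJC z).star_eq).symm
    have expand : ∀ (c : ℂ) (x y : H), J (C (x + c • y)) (x + c • y)
        = J (C x) x + c • J (C x) y + star c • J (C y) x + (star c * c) • J (C y) y := by
      intro c x y
      rw [map_add, C.map_smul c y]
      simp only [hJa_l, hJa_r, hJs_lC, hJs_rC]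
      module
    intro x y
    have key : ∀ c : ℂ, c • (J (C x) y) + star c • (J (C y) x)
        - star c • star (J (C x) y) - c • star (J (C y) x) = 0 := by
      intro c
      have h0 := hdiag0 (x + c • y)
      rw [expand] at h0
      have hstexp : star (J (C x) x + c • J (C x) y + star c • J (C y) x
          + (star c * c) • J (C y) y)
          = star (J (C x) x) + star c • star (J (C x) y) + c • star (J (C y) x)
            + (star c * c) • star (J (C y) y) := by
        simp only [star_add, star_smul, star_star, star_mul]
        try module
      rw [hstexp] at h0
      have hx := (hsaJC x).star_eq
      have hy := (hsaJC y).star_eq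
      rw [hx, hy] at h0
      calc c • (J (C x) y) + star c • (J (C y) x)
          - star c • star (J (C x) y) - c • star (J (C y) x)
          = (J (C x) x + c • J (C x) y + star c • J (C y) x + (star c * c) • J (C y) y)
            - (J (C x) x + star c • star (J (C x) y) + c • star (J (C y) x)
              + (star c * c) • J (C y) y) := by module
        _ = 0 := h0
    have k1 := key 1
    have kI := key Complex.I
    simp only [one_smul, star_one] at k1
    have kI' : J (C x) y - J (C y) x + star (J (C x) y) - star (J (C y) x) = 0 := by
      have h2 : (-Complex.I) • (Complex.I • (J (C x) y) + star Complex.I • (J (C y) x)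
          - star Complex.I • star (J (C x) y) - Complex.I • star (J (C y) x))
          = J (C x) y - J (C y) x + star (J (C x) y) - star (J (C y) x) := by
        simp only [Complex.star_def, Complex.conj_I, smul_smul, neg_smul, smul_sub, smul_add,
          smul_neg]
        match_scalars
        all_goals ring_nf
        all_goals try simp [Complex.conj_I, Complex.I_sq]
        all_goals try ring
      rw [← h2, kI, smul_zero]
    have h3 : (2:ℂ) • (J (C x) y - star (J (C y) x)) = 0 := by
      have e : (2:ℂ) • (J (C x) y - star (J (C y) x))
          = (J (C x) y + J (C y) x - star (J (C x) y) - star (J (C y) x))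
            + (J (C x) y - J (C y) x + star (J (C x) y) - star (J (C y) x)) := by
        module
      rw [e, k1, kI', add_zero]
    have h4 : J (C x) y - star (J (C y) x) = 0 := by
      have := congrArg (fun a => ((2:ℂ)⁻¹) • a) h3
      simpa [smul_smul] using this
    have h5 : J (C x) y = star (J (C y) x) := sub_eq_zero.mp h4
    rw [h5, hJstar]
  -- A-linearity of C with respect to the right action
  have hopC : ∀ (a : A) (x : H), C (x <• a) = (C x) <• a := by
    intro a x
    have hd : inner (𝕜 := A) (C (x <• a) - (C x) <• a) (C (x <• a) - (C x) <• a) = 0 := by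
      set d := C (x <• a) - (C x) <• a with hddef
      have e1 : inner (𝕜 := A) d (C (x <• a)) = inner (𝕜 := A) (C d) (x <• a) :=
        (hCsa d (x <• a)).symm
      calc inner (𝕜 := A) d d
          = inner (𝕜 := A) d (C (x <• a)) - inner (𝕜 := A) d ((C x) <• a) := by
            rw [hddef, RightCStarModule.inner_sub_right]
        _ = inner (𝕜 := A) (C d) (x <• a) - inner (𝕜 := A) d ((C x) <• a) := by rw [e1]
        _ = inner (𝕜 := A) (C d) x * a - inner (𝕜 := A) d (C x) * a := by
            rw [RightCStarModule.inner_op_smul_right, RightCStarModule.inner_op_smul_right]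
        _ = (inner (𝕜 := A) (C d) x - inner (𝕜 := A) d (C x)) * a := by rw [sub_mul]
        _ = 0 := by rw [hCsa d x, sub_self, zero_mul]
    have := RightCStarModule.inner_self.mp hd
    exact sub_eq_zero.mp this
  -- Norm bound via Cauchy-Schwarz
  have hBnorm : ∀ x y : H, ‖J (C x) y‖ ≤ B₀ * (‖x‖ * ‖y‖) := by
    apply stmt7aux_cs_bound (fun x y => J (C x) y)
    · intro x y z
      show J (C (x + y)) z = J (C x) z + J (C y) z
      rw [map_add, hJa_l]
    · intro x y z
      show J (C x) (y + z) = J (C x) y + J (C x) z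
      rw [hJa_r]
    · intro a x y
      show J (C (x <• a)) y = star a * J (C x) y
      rw [hopC, hJop_l]
    · intro a x y
      show J (C x) (y <• a) = J (C x) y * a
      rw [hJop_r]
    · intro x y
      show star (J (C x) y) = J (C y) x
      rw [hJstar, hmoveJ]
    · exact hCdiagJ
    · exact hB₀.le
    · intro x
      have h2 := CStarAlgebra.norm_le_norm_of_nonneg_of_le (hCdiagJ x) (hframe2 x)
      refine h2.trans ?_
      rw [norm_smul]
      have e : ‖inner (𝕜 := A) x x‖ = ‖x‖ * ‖x‖ := by
        rw [← RightCStarModule.norm_sq_eq, pow_two]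
      rw [e]
      simp [abs_of_nonneg hB₀.le]
  -- apply the moment lemma to J
  have hgm := fun f => stmt7aux_gen_moment C Cinv hCinv₁ hCinv₂ J hJa_l hJa_r hJs_l hJs_r
    hJstar hmoveJ hdiagJ hCdiagJ B₀ hB₀.le hBnorm f
  -- apply the moment lemma to the inner product
  have hinorm : ∀ x y : H, ‖inner (𝕜 := A) (C x) y‖ ≤ ‖C‖ * (‖x‖ * ‖y‖) := by
    intro x y
    refine le_trans (RightCStarModule.norm_inner_le H) ?_
    calc ‖C x‖ * ‖y‖ ≤ (‖C‖ * ‖x‖) * ‖y‖ :=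
          mul_le_mul_of_nonneg_right (C.le_opNorm x) (norm_nonneg y)
      _ = ‖C‖ * (‖x‖ * ‖y‖) := by ring
  have him := fun f => stmt7aux_gen_moment C Cinv hCinv₁ hCinv₂
    (fun x y => inner (𝕜 := A) x y)
    (fun x y z => RightCStarModule.inner_add_left)
    (fun x y z => RightCStarModule.inner_add_right)
    (fun t x y => RightCStarModule.inner_smul_left_real)
    (fun t x y => RightCStarModule.inner_smul_right_real)
    (fun x y => RightCStarModule.star_inner x y)
    (fun x y => hCsa x y)
    (fun x => RightCStarModule.inner_self_nonneg)
    (fun x => by simpa [hCsa] using hCpos x)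
    ‖C‖ (norm_nonneg C) hinorm f
  -- positivity of the norms involved
  have hone : (1:ℝ) ≤ ‖C‖ * ‖Cinv‖ := by
    have h1 : ‖(1 : H →L[ℂ] H)‖ = 1 := ContinuousLinearMap.norm_id
    calc (1:ℝ) = ‖(1 : H →L[ℂ] H)‖ := h1.symm
      _ = ‖C.comp Cinv‖ := by rw [hCinv₁]
      _ ≤ ‖C‖ * ‖Cinv‖ := ContinuousLinearMap.opNorm_comp_le _ _
  have hCn : 0 < ‖C‖ := by
    by_contra hc
    push_neg at hc
    have h0 : ‖C‖ = 0 := le_antisymm hc (norm_nonneg C)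
    rw [h0] at hone
    norm_num at hone
  have hCinvn : 0 < ‖Cinv‖ := by
    by_contra hc
    push_neg at hc
    have h0 : ‖Cinv‖ = 0 := le_antisymm hc (norm_nonneg Cinv)
    rw [h0] at hone
    norm_num at hone
  have hChsq : ‖C‖ ≤ ‖Chalf‖ * ‖Chalf‖ := by
    rw [← hChalf]
    exact ContinuousLinearMap.opNorm_comp_le _ _
  have hCihsq : ‖Cinv‖ ≤ ‖Cinvhalf‖ * ‖Cinvhalf‖ := by
    rw [← hCinvhalf]
    exact ContinuousLinearMap.opNorm_comp_le _ _
  have hChn : 0 < ‖Chalf‖ := by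
    rcases eq_or_lt_of_le (norm_nonneg Chalf) with h | h
    · exfalso; rw [← h] at hChsq; nlinarith
    · exact h
  have hCihn : 0 < ‖Cinvhalf‖ := by
    rcases eq_or_lt_of_le (norm_nonneg Cinvhalf) with h | h
    · exfalso; rw [← h] at hCihsq; nlinarith
    · exact h
  -- Main conclusion
  intro f
  have hJff : J f f = ∫ w, inner (𝕜 := A) f (F w) * inner (𝕜 := A) (F w) f ∂μ := rfl
  constructor
  · -- lower bound
    have h1 : inner (𝕜 := A) (Ks f) (Ks f)
        ≤ ‖Cinv‖ • inner (𝕜 := A) (C (Ks f)) (Ks f) := (him (Ks f)).1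
    have hhh : inner (𝕜 := A) (Chalf (Ks f)) (Chalf (Ks f))
        = inner (𝕜 := A) (C (Ks f)) (Ks f) := by
      have e1 : Chalf (Chalf (Ks f)) = C (Ks f) := by
        have := DFunLike.congr_fun hChalf (Ks f)
        simpa using this
      rw [hChalfsa (Ks f) (Chalf (Ks f)), e1, ← hCsa]
    have hChpos : (0:A) ≤ inner (𝕜 := A) (C (Ks f)) (Ks f) := by
      rw [hCsa]; exact hCpos (Ks f)
    have step1 : (A₀ / (‖Cinvhalf‖ ^ 2 * ‖Chalf‖ ^ 2)) • inner (𝕜 := A) (Ks f) (Ks f)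
        ≤ ((A₀ / (‖Cinvhalf‖ ^ 2 * ‖Chalf‖ ^ 2)) * ‖Cinv‖)
            • inner (𝕜 := A) (C (Ks f)) (Ks f) := by
      have := smul_le_smul_of_nonneg_left h1
        (le_of_lt (by positivity : (0:ℝ) < A₀ / (‖Cinvhalf‖ ^ 2 * ‖Chalf‖ ^ 2)))
      rwa [smul_smul] at this
    have step2 : ((A₀ / (‖Cinvhalf‖ ^ 2 * ‖Chalf‖ ^ 2)) * ‖Cinv‖)
          • inner (𝕜 := A) (C (Ks f)) (Ks f)
        ≤ (A₀ / ‖Chalf‖ ^ 2) • inner (𝕜 := A) (C (Ks f)) (Ks f) := by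
      refine smul_le_smul_of_nonneg_right ?_ hChpos
      rw [div_mul_eq_mul_div, div_le_div_iff₀ (by positivity) (by positivity)]
      have h2 : ‖Cinv‖ ≤ ‖Cinvhalf‖ ^ 2 := by rw [pow_two]; exact hCihsq
      nlinarith [mul_nonneg (mul_nonneg hA₀.le (sq_nonneg ‖Chalf‖)) (sub_nonneg.mpr h2),
        sq_nonneg ‖Chalf‖, hA₀.le]
    have step3 : (A₀ / ‖Chalf‖ ^ 2) • inner (𝕜 := A) (C (Ks f)) (Ks f)
        ≤ (1 / ‖Chalf‖ ^ 2) • J (C f) f := by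
      have e1 : (A₀ / ‖Chalf‖ ^ 2) • inner (𝕜 := A) (C (Ks f)) (Ks f)
          = (1 / ‖Chalf‖ ^ 2) • (A₀ • inner (𝕜 := A) (C (Ks f)) (Ks f)) := by
        rw [smul_smul]; congr 1; ring
      rw [e1]
      refine smul_le_smul_of_nonneg_left ?_ (by positivity)
      rw [← hhh]
      exact hframe1 f
    have step4 : (1 / ‖Chalf‖ ^ 2) • J (C f) f ≤ ‖C‖⁻¹ • J (C f) f := by
      refine smul_le_smul_of_nonneg_right ?_ (hCdiagJ f)
      rw [one_div]
      refine inv_anti₀ hCn ?_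
      rw [pow_two]; exact hChsq
    have step5 : ‖C‖⁻¹ • J (C f) f ≤ J f f := by
      have h2 := (hgm f).2 hCn
      have h3 := smul_le_smul_of_nonneg_left h2
        (le_of_lt (by positivity : (0:ℝ) < ‖C‖⁻¹))
      rwa [smul_smul, inv_mul_cancel₀ hCn.ne', one_smul] at h3
    rw [← hJff]
    exact step1.trans (step2.trans (step3.trans (step4.trans step5)))
  · -- upper bound
    have h2 := (hgm f).1
    have step1 : J f f ≤ ‖Cinv‖ • (B₀ • inner (𝕜 := A) f f) :=
      h2.trans (smul_le_smul_of_nonneg_left (hframe2 f) (norm_nonneg Cinv))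
    have step2 : ‖Cinv‖ • (B₀ • inner (𝕜 := A) f f)
        = (‖Cinv‖ * B₀) • inner (𝕜 := A) f f := by
      rw [smul_smul]
    have hip : (0:A) ≤ inner (𝕜 := A) f f := RightCStarModule.inner_self_nonneg
    have h3 : ‖Cinv‖ ≤ ‖Cinvhalf‖ ^ 2 := by rw [pow_two]; exact hCihsq
    have step3 : (‖Cinv‖ * B₀) • inner (𝕜 := A) f f
        ≤ (B₀ * ‖Cinvhalf‖ ^ 2) • inner (𝕜 := A) f f := by
      refine smul_le_smul_of_nonneg_right ?_ hip
      nlinarith [hB₀.le, mul_nonneg hB₀.le (sub_nonneg.mpr h3)]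
    rw [← hJff]
    exact step1.trans (step2.le.trans step3)
end

section
/- Let H be a Hilbert C*-module over a unital C*-algebra A, C ∈ GL⁺(H), and F : Ω → H a continuous C-controlled K-frame with bounds A₀ and B₀ for some K ∈ End*_A(H). Let M ∈ End*_A(H) with R(M) ⊆ R(K), R(K) closed, and suppose C commutes with M* and K*. Then F is a continuous C-controlled M-frame for H with bounds A₀/λ and B₀, where λ > 0 satisfies MM* ≤ λKK*. -/
set_option linter.unusedSectionVars false
set_option linter.unusedVariables false
set_option maxHeartbeats 1000000


open MeasureTheory
open scoped RightActions

/-- The definition of a Hilbert C⋆-module as in the older Mathlib (right `Aᵐᵒᵖ`-action). -/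
class CStarModuleOld (A E : outParam Type*) [NonUnitalSemiring A] [StarRing A] [Module ℂ A]
    [AddCommGroup E] [Module ℂ E] [PartialOrder A] [SMul Aᵐᵒᵖ E] [Norm A] [Norm E]
    extends Inner A E where
  inner_add_right {x} {y} {z} : inner x (y + z) = inner x y + inner x z
  inner_self_nonneg {x} : 0 ≤ inner x x
  inner_self {x} : inner x x = 0 ↔ x = 0
  inner_op_smul_right {a : A} {x y : E} : inner x (y <• a) = inner x y * a
  inner_smul_right_complex {z : ℂ} {x} {y} : inner x (z • y) = z • inner x y
  star_inner x y : star (inner x y) = inner y x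
  norm_eq_sqrt_norm_inner_self x : ‖x‖ = √‖inner x x‖


attribute [simp] CStarModuleOld.inner_add_right CStarModuleOld.star_inner
  CStarModuleOld.inner_op_smul_right CStarModuleOld.inner_smul_right_complex

namespace CStarModuleOld

section OldLemmas

variable {A E : Type*} [CStarAlgebra A] [PartialOrder A] [StarOrderedRing A]
  [NormedAddCommGroup E] [NormedSpace ℂ E] [SMul Aᵐᵒᵖ E] [CStarModuleOld A E]

local notation "⟪" x ", " y "⟫" => inner A x y

@[simp]
lemma inner_add_left {x y z : E} : ⟪x + y, z⟫ = ⟪x, z⟫ + ⟪y, z⟫ := by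
  rw [← star_star (r := ⟪x + y, z⟫)]
  simp only [inner_add_right, star_add, star_inner]

@[simp]
lemma inner_op_smul_left {a : A} {x y : E} : ⟪x <• a, y⟫ = star a * ⟪x, y⟫ := by
  rw [← star_inner]; simp

@[simp]
lemma inner_smul_left_complex {z : ℂ} {x y : E} : ⟪z • x, y⟫ = star z • ⟪x, y⟫ := by
  rw [← star_inner]
  simp

@[simp]
lemma inner_smul_left_real {z : ℝ} {x y : E} : ⟪z • x, y⟫ = z • ⟪x, y⟫ := by
  have h₁ : z • x = (z : ℂ) • x := by simp
  rw [h₁, ← star_inner, inner_smul_right_complex]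
  simp

@[simp]
lemma inner_smul_right_real {z : ℝ} {x y : E} : ⟪x, z • y⟫ = z • ⟪x, y⟫ := by
  have h₁ : z • y = (z : ℂ) • y := by simp
  rw [h₁, ← star_inner, inner_smul_left_complex]
  simp

/-- The inner product as a sesquilinear map. -/
def innerₛₗ : E →ₗ⋆[ℂ] E →ₗ[ℂ] A where
  toFun x := { toFun := fun y => ⟪x, y⟫
               map_add' := fun z y => by simp
               map_smul' := fun z y => by simp }
  map_add' z y := by ext; simp
  map_smul' z y := by ext; simp

lemma innerₛₗ_apply {x y : E} : innerₛₗ x y = ⟪x, y⟫ := rfl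

@[simp] lemma inner_zero_right {x : E} : ⟪x, 0⟫ = 0 := by simp [← innerₛₗ_apply]
@[simp] lemma inner_zero_left {x : E} : ⟪0, x⟫ = 0 := by simp [← innerₛₗ_apply]
@[simp] lemma inner_neg_right {x y : E} : ⟪x, -y⟫ = -⟪x, y⟫ := by simp [← innerₛₗ_apply]
@[simp] lemma inner_neg_left {x y : E} : ⟪-x, y⟫ = -⟪x, y⟫ := by simp [← innerₛₗ_apply]
@[simp] lemma inner_sub_right {x y z : E} : ⟪x, y - z⟫ = ⟪x, y⟫ - ⟪x, z⟫ := by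
  simp [← innerₛₗ_apply]
@[simp] lemma inner_sub_left {x y z : E} : ⟪x - y, z⟫ = ⟪x, z⟫ - ⟪y, z⟫ := by
  simp [← innerₛₗ_apply]

lemma norm_sq_eq {x : E} : ‖x‖ ^ 2 = ‖⟪x, x⟫‖ := by
  simp [norm_eq_sqrt_norm_inner_self (A := A) x]

lemma inner_mul_inner_swap_le {x y : E} : ⟪y, x⟫ * ⟪x, y⟫ ≤ ‖x‖ ^ 2 • ⟪y, y⟫ := by
  rcases eq_or_ne x 0 with h | h
  · simp [h]
  · have h₁ : ∀ (a : A),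
        (0 : A) ≤ ‖x‖ ^ 2 • (star a * a) - ‖x‖ ^ 2 • (star a * ⟪x, y⟫)
                  - ‖x‖ ^ 2 • (⟪y, x⟫ * a) + ‖x‖ ^ 2 • (‖x‖ ^ 2 • ⟪y, y⟫) := fun a => by
      calc (0 : A) ≤ ⟪x <• a - ‖x‖ ^ 2 • y, x <• a - ‖x‖ ^ 2 • y⟫ := by
                      exact inner_self_nonneg
            _ = star a * ⟪x, x⟫ * a - ‖x‖ ^ 2 • (star a * ⟪x, y⟫)
                  - ‖x‖ ^ 2 • (⟪y, x⟫ * a) + ‖x‖ ^ 2 • (‖x‖ ^ 2 • ⟪y, y⟫) := by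
                      simp only [inner_sub_right, inner_op_smul_right, inner_sub_left,
                        inner_op_smul_left, inner_smul_left_real, mul_sub, mul_smul_comm,
                        inner_smul_right_real, smul_sub, mul_assoc, sub_mul, smul_mul_assoc]
                      abel
            _ ≤ ‖x‖ ^ 2 • (star a * a) - ‖x‖ ^ 2 • (star a * ⟪x, y⟫)
                  - ‖x‖ ^ 2 • (⟪y, x⟫ * a) + ‖x‖ ^ 2 • (‖x‖ ^ 2 • ⟪y, y⟫) := by
                      gcongr
                      calc _ ≤ ‖⟪x, x⟫‖ • (star a * a) :=
                          CStarAlgebra.star_left_conjugate_le_norm_smul (hb := star_inner x x)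
                        _ = (√‖⟪x, x⟫‖) ^ 2 • (star a * a) := by
                          rw [Real.sq_sqrt]
                          positivity
                        _ = ‖x‖ ^ 2 • (star a * a) := by
                          rw [← norm_eq_sqrt_norm_inner_self (A := A) x]
    specialize h₁ ⟪x, y⟫
    simp only [star_inner, sub_self, zero_sub, le_neg_add_iff_add_le, add_zero] at h₁
    have hpos : 0 < ‖x‖ := by
      rw [norm_eq_sqrt_norm_inner_self (A := A) x, Real.sqrt_pos, norm_pos_iff]
      exact fun H => h (inner_self.mp H)
    rwa [smul_le_smul_iff_of_pos_left (pow_pos hpos _)] at h₁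

variable (E) in
/-- Cauchy-Schwarz. -/
lemma norm_inner_le {x y : E} : ‖⟪x, y⟫‖ ≤ ‖x‖ * ‖y‖ := by
  have := calc ‖⟪x, y⟫‖ ^ 2 = ‖⟪y, x⟫ * ⟪x, y⟫‖ := by
                rw [← star_inner x, CStarRing.norm_star_mul_self, pow_two]
    _ ≤ ‖‖x‖ ^ 2 • ⟪y, y⟫‖ := by
                refine CStarAlgebra.norm_le_norm_of_nonneg_of_le ?_ inner_mul_inner_swap_le
                rw [← star_inner x]
                exact star_mul_self_nonneg ⟪x, y⟫
    _ = ‖x‖ ^ 2 * ‖⟪y, y⟫‖ := by simp [norm_smul]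
    _ = ‖x‖ ^ 2 * ‖y‖ ^ 2 := by
                simp only [norm_eq_sqrt_norm_inner_self (A := A) y, norm_nonneg, Real.sq_sqrt]
    _ = (‖x‖ * ‖y‖) ^ 2 := by simp only [mul_pow]
  refine (pow_le_pow_iff_left₀ (norm_nonneg ⟪x, y⟫) ?_ (by simp)).mp this
  exact mul_nonneg (norm_nonneg _) (norm_nonneg _)

/-- The inner product as a continuous sesquilinear map. -/
noncomputable def innerSL : E →L⋆[ℂ] E →L[ℂ] A :=
  LinearMap.mkContinuous₂ (innerₛₗ : E →ₗ⋆[ℂ] E →ₗ[ℂ] A) 1 <| fun x y => by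
    simp [innerₛₗ_apply, norm_inner_le E]

lemma innerSL_apply {x y : E} : innerSL x y = ⟪x, y⟫ := rfl

lemma continuous_inner : Continuous (fun x : E × E => ⟪x.1, x.2⟫) := by
  simp_rw [← innerSL_apply]
  fun_prop

end OldLemmas

end CStarModuleOld

open CStarModuleOld


noncomputable section AdjPairDev

variable {A : Type*} [CStarAlgebra A] [PartialOrder A] [StarOrderedRing A]
  {H : Type*} [NormedAddCommGroup H] [NormedSpace ℂ H] [SMul Aᵐᵒᵖ H]
  [CStarModuleOld A H] [CompleteSpace H]

local notation "⟪" x ", " y "⟫" => inner (𝕜 := A) x y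

/-- Separation of points by the `A`-valued inner product. -/
lemma eq_zero_of_inner_left (z : H) (h : ∀ y : H, ⟪z, y⟫ = 0) : z = 0 :=
  CStarModuleOld.inner_self.mp (h z)

/-- A pair of continuous linear maps on a Hilbert C⋆-module which are adjoint
to each other. -/
structure AdjPair (A : Type*) (H : Type*) [CStarAlgebra A] [PartialOrder A]
    [StarOrderedRing A] [NormedAddCommGroup H] [NormedSpace ℂ H] [SMul Aᵐᵒᵖ H]
    [CStarModuleOld A H] where
  S : H →L[ℂ] H
  adj : H →L[ℂ] H
  spec : ∀ x y : H, inner (𝕜 := A) (S x) y = inner (𝕜 := A) x (adj y)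

namespace AdjPair

variable {a b : AdjPair A H}

lemma spec' (a : AdjPair A H) (x y : H) : ⟪a.adj x, y⟫ = ⟪x, a.S y⟫ := by
  have := congrArg star (a.spec y x)
  simpa using this.symm

lemma adj_eq (h : a.S = b.S) : a.adj = b.adj := by
  ext y
  have h1 : ∀ x : H, ⟪x, a.adj y⟫ = ⟪x, b.adj y⟫ := fun x => by
    rw [← a.spec, ← b.spec, h]
  have h2 : ⟪a.adj y - b.adj y, a.adj y - b.adj y⟫ = 0 := by
    rw [CStarModuleOld.inner_sub_right, h1 (a.adj y - b.adj y), sub_self]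
  exact sub_eq_zero.mp (CStarModuleOld.inner_self.mp h2)

@[ext] lemma ext (h : a.S = b.S) : a = b := by
  cases a; cases b
  simp only [mk.injEq]
  exact ⟨h, adj_eq h⟩

instance : Zero (AdjPair A H) := ⟨⟨0, 0, by simp⟩⟩
instance : One (AdjPair A H) := ⟨⟨1, 1, by simp⟩⟩
instance : Add (AdjPair A H) :=
  ⟨fun a b => ⟨a.S + b.S, a.adj + b.adj, fun x y => by
    simp [a.spec, b.spec]⟩⟩
instance : Neg (AdjPair A H) :=
  ⟨fun a => ⟨-a.S, -a.adj, fun x y => by simp [a.spec]⟩⟩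
instance : Sub (AdjPair A H) :=
  ⟨fun a b => ⟨a.S - b.S, a.adj - b.adj, fun x y => by
    simp [a.spec, b.spec]⟩⟩
instance : Mul (AdjPair A H) :=
  ⟨fun a b => ⟨a.S * b.S, b.adj * a.adj, fun x y => by
    simp only [ContinuousLinearMap.mul_apply]
    rw [a.spec, b.spec]⟩⟩
instance : SMul ℂ (AdjPair A H) :=
  ⟨fun z a => ⟨z • a.S, star z • a.adj, fun x y => by
    simp only [ContinuousLinearMap.smul_apply]
    rw [inner_smul_left_complex, a.spec, ← inner_smul_right_complex]⟩⟩
instance : SMul ℕ (AdjPair A H) :=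
  ⟨fun n a => ⟨n • a.S, n • a.adj, fun x y => by
    simp only [ContinuousLinearMap.smul_apply]
    rw [← Nat.cast_smul_eq_nsmul ℝ n (a.S x), ← Nat.cast_smul_eq_nsmul ℝ n (a.adj y),
      inner_smul_left_real, a.spec, ← inner_smul_right_real]⟩⟩
instance : SMul ℤ (AdjPair A H) :=
  ⟨fun n a => ⟨n • a.S, n • a.adj, fun x y => by
    simp only [ContinuousLinearMap.smul_apply]
    rw [← Int.cast_smul_eq_zsmul ℝ n (a.S x), ← Int.cast_smul_eq_zsmul ℝ n (a.adj y),
      inner_smul_left_real, a.spec, ← inner_smul_right_real]⟩⟩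
instance : NatCast (AdjPair A H) :=
  ⟨fun n => ⟨(n : H →L[ℂ] H), (n : H →L[ℂ] H), fun x y => by
    have hn : (n : H →L[ℂ] H) = (n : ℂ) • (1 : H →L[ℂ] H) := by
      rw [← map_natCast (algebraMap ℂ (H →L[ℂ] H)) n, Algebra.algebraMap_eq_smul_one]
    simp only [hn, ContinuousLinearMap.smul_apply, ContinuousLinearMap.one_apply]
    rw [inner_smul_left_complex, ← inner_smul_right_complex]
    simp⟩⟩
instance : IntCast (AdjPair A H) :=
  ⟨fun n => ⟨(n : H →L[ℂ] H), (n : H →L[ℂ] H), fun x y => by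
    have hn : (n : H →L[ℂ] H) = (n : ℂ) • (1 : H →L[ℂ] H) := by
      rw [← map_intCast (algebraMap ℂ (H →L[ℂ] H)) n, Algebra.algebraMap_eq_smul_one]
    simp only [hn, ContinuousLinearMap.smul_apply, ContinuousLinearMap.one_apply]
    rw [inner_smul_left_complex, ← inner_smul_right_complex]
    simp⟩⟩

private lemma pow_spec (a : AdjPair A H) (n : ℕ) :
    ∀ x y : H, ⟪(a.S ^ n) x, y⟫ = ⟪x, (a.adj ^ n) y⟫ := by
  induction n with
  | zero => simp
  | succ n ih =>
    intro x y
    rw [pow_succ, pow_succ']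
    simp only [ContinuousLinearMap.mul_apply]
    rw [ih (a.S x) y, a.spec]

instance : Pow (AdjPair A H) ℕ :=
  ⟨fun a n => ⟨a.S ^ n, a.adj ^ n, pow_spec a n⟩⟩

lemma injective_S : Function.Injective (fun a : AdjPair A H => a.S) :=
  fun _ _ h => ext h

instance instRing : Ring (AdjPair A H) :=
  Function.Injective.ring (fun a : AdjPair A H => a.S) injective_S
    rfl rfl (fun _ _ => rfl) (fun _ _ => rfl) (fun _ => rfl) (fun _ _ => rfl)
    (fun _ _ => rfl) (fun _ _ => rfl) (fun _ _ => rfl) (fun _ => rfl) (fun _ => rfl)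

/-- The inclusion into continuous linear maps, as a ring homomorphism. -/
def ι : AdjPair A H →+* (H →L[ℂ] H) where
  toFun a := a.S
  map_one' := rfl
  map_mul' _ _ := rfl
  map_zero' := rfl
  map_add' _ _ := rfl

instance instNormedRing : NormedRing (AdjPair A H) :=
  NormedRing.induced _ _ (ι (A := A) (H := H)) injective_S

@[simp] lemma norm_def (a : AdjPair A H) : ‖a‖ = ‖a.S‖ := rfl

instance instModule : Module ℂ (AdjPair A H) :=
  Function.Injective.module ℂ
    { toFun := fun a : AdjPair A H => a.S, map_zero' := rfl, map_add' := fun _ _ => rfl }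
    injective_S (fun _ _ => rfl)

instance instAlgebra : Algebra ℂ (AdjPair A H) :=
  Algebra.ofModule (fun z a b => ext (smul_mul_assoc z a.S b.S))
    (fun z a b => ext (mul_smul_comm z a.S b.S))

instance instNormedAlgebra : NormedAlgebra ℂ (AdjPair A H) where
  norm_smul_le z a := by
    change ‖z • a.S‖ ≤ ‖z‖ * ‖a.S‖
    exact (norm_smul z a.S).le

instance instStarRing : StarRing (AdjPair A H) where
  star a := ⟨a.adj, a.S, a.spec'⟩
  star_involutive _ := rfl
  star_mul _ _ := rfl
  star_add _ _ := rfl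

@[simp] lemma star_S (a : AdjPair A H) : (star a).S = a.adj := rfl
@[simp] lemma star_adj (a : AdjPair A H) : (star a).adj = a.S := rfl

lemma adj_eq_S_of_sa {a : AdjPair A H} (ha : IsSelfAdjoint a) : a.adj = a.S :=
  congrArg S ha

instance instStarModule : StarModule ℂ (AdjPair A H) where
  star_smul z a := ext rfl


lemma sq_norm_le (a : AdjPair A H) : ‖a.S‖ * ‖a.S‖ ≤ ‖a.adj.comp a.S‖ := by
  set c : ℝ := ‖a.adj.comp a.S‖ with hc
  have hc0 : 0 ≤ c := norm_nonneg _
  have hbound : ∀ v : H, ‖a.S v‖ ≤ Real.sqrt c * ‖v‖ := by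
    intro v
    have h1 : ‖a.S v‖ ^ 2 = ‖⟪a.S v, a.S v⟫‖ := CStarModuleOld.norm_sq_eq
    have h2 : ⟪a.S v, a.S v⟫ = ⟪v, (a.adj.comp a.S) v⟫ := by
      rw [a.spec]; rfl
    have h3 : ‖⟪v, (a.adj.comp a.S) v⟫‖ ≤ ‖v‖ * (c * ‖v‖) := by
      refine (CStarModuleOld.norm_inner_le H).trans ?_
      have := (a.adj.comp a.S).le_opNorm v
      exact mul_le_mul_of_nonneg_left this (norm_nonneg v)
    have h4 : ‖a.S v‖ ^ 2 ≤ c * ‖v‖ ^ 2 := by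
      rw [h1, h2]
      calc ‖⟪v, (a.adj.comp a.S) v⟫‖ ≤ ‖v‖ * (c * ‖v‖) := h3
        _ = c * ‖v‖ ^ 2 := by ring
    have h5 : ‖a.S v‖ ^ 2 ≤ (Real.sqrt c * ‖v‖) ^ 2 := by
      rw [mul_pow, Real.sq_sqrt hc0]; exact h4
    calc ‖a.S v‖ = Real.sqrt (‖a.S v‖ ^ 2) := (Real.sqrt_sq (norm_nonneg _)).symm
      _ ≤ Real.sqrt ((Real.sqrt c * ‖v‖) ^ 2) := Real.sqrt_le_sqrt h5
      _ = Real.sqrt c * ‖v‖ := Real.sqrt_sq (by positivity)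
  have h6 : ‖a.S‖ ≤ Real.sqrt c :=
    a.S.opNorm_le_bound (Real.sqrt_nonneg c) hbound
  calc ‖a.S‖ * ‖a.S‖ ≤ Real.sqrt c * Real.sqrt c :=
        mul_le_mul h6 h6 (norm_nonneg _) (Real.sqrt_nonneg c)
    _ = c := Real.mul_self_sqrt hc0


lemma norm_S_le_norm_adj (a : AdjPair A H) : ‖a.S‖ ≤ ‖a.adj‖ := by
  rcases eq_or_lt_of_le (norm_nonneg a.S) with h | h
  · rw [← h]; exact norm_nonneg _
  · have h1 : ‖a.S‖ * ‖a.S‖ ≤ ‖a.adj‖ * ‖a.S‖ :=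
      (a.sq_norm_le).trans ((a.adj.opNorm_comp_le a.S))
    exact le_of_mul_le_mul_right h1 h

lemma norm_adj_eq (a : AdjPair A H) : ‖a.adj‖ = ‖a.S‖ :=
  le_antisymm (norm_S_le_norm_adj (star a)) (norm_S_le_norm_adj a)

instance instCStarRing : CStarRing (AdjPair A H) where
  norm_mul_self_le a := a.sq_norm_le

instance instCompleteSpace : CompleteSpace (AdjPair A H) := by
  apply Metric.complete_of_cauchySeq_tendsto
  intro u hu
  have hdist : ∀ n m, dist (u n) (u m) = ‖(u n).S - (u m).S‖ := fun n m => by rw [dist_eq_norm]; rfl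
  have hS : CauchySeq (fun n => (u n).S) := by
    rw [Metric.cauchySeq_iff] at hu ⊢
    intro ε hε
    obtain ⟨N, hN⟩ := hu ε hε
    exact ⟨N, fun n hn m hm => hN n hn m hm⟩
  have hadjdist : ∀ n m, dist ((u n).adj) ((u m).adj) = dist (u n) (u m) := by
    intro n m
    have : (u n).adj - (u m).adj = (u n - u m).adj := rfl
    rw [dist_eq_norm, this, norm_adj_eq]
    rw [dist_eq_norm]; rfl
  have hAdj : CauchySeq (fun n => (u n).adj) := by
    rw [Metric.cauchySeq_iff] at hu ⊢
    intro ε hε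
    obtain ⟨N, hN⟩ := hu ε hε
    exact ⟨N, fun n hn m hm => by rw [hadjdist]; exact hN n hn m hm⟩
  obtain ⟨S₀, hS₀⟩ := cauchySeq_tendsto_of_complete hS
  obtain ⟨T₀, hT₀⟩ := cauchySeq_tendsto_of_complete hAdj
  have happly : ∀ (v : H), Filter.Tendsto (fun n => (u n).S v) Filter.atTop (nhds (S₀ v)) := by
    intro v
    exact Filter.Tendsto.comp ((ContinuousLinearMap.apply ℂ H v).continuous.tendsto S₀) hS₀
  have happly' : ∀ (v : H), Filter.Tendsto (fun n => (u n).adj v) Filter.atTop (nhds (T₀ v)) := by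
    intro v
    exact Filter.Tendsto.comp ((ContinuousLinearMap.apply ℂ H v).continuous.tendsto T₀) hT₀
  have hspec : ∀ x y : H, ⟪S₀ x, y⟫ = ⟪x, T₀ y⟫ := by
    intro x y
    have l1 : Filter.Tendsto (fun n => ⟪(u n).S x, y⟫) Filter.atTop (nhds ⟪S₀ x, y⟫) := by
      have := (CStarModuleOld.continuous_inner (A := A) (E := H)).tendsto (S₀ x, y)
      exact this.comp ((happly x).prodMk_nhds tendsto_const_nhds)
    have l2 : Filter.Tendsto (fun n => ⟪x, (u n).adj y⟫) Filter.atTop (nhds ⟪x, T₀ y⟫) := by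
      have := (CStarModuleOld.continuous_inner (A := A) (E := H)).tendsto (x, T₀ y)
      exact this.comp (tendsto_const_nhds.prodMk_nhds (happly' y))
    have : (fun n => ⟪(u n).S x, y⟫) = fun n => ⟪x, (u n).adj y⟫ := by
      ext n; exact (u n).spec x y
    rw [this] at l1
    exact tendsto_nhds_unique l1 l2
  refine ⟨⟨S₀, T₀, hspec⟩, ?_⟩
  rw [tendsto_iff_dist_tendsto_zero]
  have heq : (fun n => dist (u n) ⟨S₀, T₀, hspec⟩) = fun n => dist ((u n).S) S₀ := rfl
  rw [heq]
  exact (tendsto_iff_dist_tendsto_zero).mp hS₀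

instance instCStarAlgebra : CStarAlgebra (AdjPair A H) where

end AdjPair

end AdjPairDev

section CommuteCfc

/-- An element commuting with a selfadjoint element `a` commutes with any
continuous function of `a`. -/
lemma commute_cfc_of_commute {B : Type*} [CStarAlgebra B] {a b : B} (ha : IsSelfAdjoint a)
    (hab : Commute a b) (f : ℝ → ℝ) : Commute (cfc f a) b := by
  by_cases hf : ContinuousOn f (spectrum ℝ a)
  · let Z : Subalgebra ℝ C(spectrum ℝ a, ℝ) :=
      { carrier := {g | Commute (cfcHom ha g) b}
        mul_mem' := fun hg hh => by
          simpa only [Set.mem_setOf_eq, map_mul] using hg.mul_left hh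
        add_mem' := fun hg hh => by
          simpa only [Set.mem_setOf_eq, map_add] using hg.add_left hh
        one_mem' := by
          simpa only [Set.mem_setOf_eq, map_one] using Commute.one_left b
        zero_mem' := by
          simpa only [Set.mem_setOf_eq, map_zero] using Commute.zero_left b
        algebraMap_mem' := fun r => by
          simpa only [Set.mem_setOf_eq, AlgHomClass.commutes, Commute, SemiconjBy] using
            (Algebra.commutes r b : Commute _ _) }
    have hZclosed : IsClosed (Z : Set C(spectrum ℝ a, ℝ)) := by
      have hc : Continuous (fun g : C(spectrum ℝ a, ℝ) => cfcHom ha g) :=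
        (cfcHom_isClosedEmbedding ha).continuous
      exact isClosed_eq (hc.mul continuous_const) (continuous_const.mul hc)
    have hidm : (ContinuousMap.restrict (spectrum ℝ a) (ContinuousMap.id ℝ)) ∈ Z := by
      show Commute _ b
      rw [cfcHom_id ha]
      exact hab
    have hZsep : Z.SeparatesPoints := by
      intro x y hxy
      refine ⟨_, ⟨ContinuousMap.restrict (spectrum ℝ a) (ContinuousMap.id ℝ), hidm, rfl⟩, ?_⟩
      simpa [ContinuousMap.restrict] using Subtype.coe_injective.ne hxy
    have htop : Z = ⊤ := by
      have h1 := ContinuousMap.subalgebra_topologicalClosure_eq_top_of_separatesPoints Z hZsep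
      have h2 : Z.topologicalClosure ≤ Z :=
        Subalgebra.topologicalClosure_minimal le_rfl hZclosed
      exact le_antisymm le_top (h1 ▸ h2)
    have hmem : (⟨(spectrum ℝ a).restrict f, hf.restrict⟩ : C(spectrum ℝ a, ℝ)) ∈ Z := by
      rw [htop]; exact Algebra.mem_top
    rw [cfc_apply f a ha hf]
    exact hmem
  · rw [cfc_apply_of_not_continuousOn a hf]
    exact Commute.zero_left b

end CommuteCfc

section KeyIneq

variable {A : Type*} [CStarAlgebra A] [PartialOrder A] [StarOrderedRing A]
  {H : Type*} [NormedAddCommGroup H] [NormedSpace ℂ H] [SMul Aᵐᵒᵖ H]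
  [CStarModuleOld A H] [CompleteSpace H]

local notation "⟪" x ", " y "⟫" => inner (𝕜 := A) x y

namespace AdjPair

noncomputable local instance instPO : PartialOrder (AdjPair A H) :=
  CStarAlgebra.spectralOrder _

local instance instSOR : StarOrderedRing (AdjPair A H) :=
  CStarAlgebra.spectralOrderedRing _

lemma inner_nonneg_of_nonneg {a : AdjPair A H} (h : 0 ≤ a) (f : H) :
    (0 : A) ≤ ⟪f, a.S f⟫ := by
  have ha : IsSelfAdjoint a := IsSelfAdjoint.of_nonneg h
  set r : AdjPair A H := cfc Real.sqrt a with hr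
  have hr_sa : IsSelfAdjoint r := cfc_predicate _ _
  have hrr : r * r = a := by
    rw [hr, ← cfc_mul Real.sqrt Real.sqrt a
      (Real.continuous_sqrt.continuousOn) (Real.continuous_sqrt.continuousOn)]
    have h1 : cfc (fun x : ℝ => Real.sqrt x * Real.sqrt x) a = cfc (fun x : ℝ => x) a :=
      cfc_congr fun x hx => Real.mul_self_sqrt (spectrum_nonneg_of_nonneg h hx)
    rw [h1]
    exact cfc_id ℝ a ha
  have hadj : r.adj = r.S := adj_eq_S_of_sa hr_sa
  have h2 : ⟪f, a.S f⟫ = ⟪r.S f, r.S f⟫ := by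
    rw [r.spec f (r.S f), hadj, ← hrr]
    rfl
  rw [h2]
  exact CStarModuleOld.inner_self_nonneg

lemma nonneg_of_inner_nonneg {a : AdjPair A H} (ha : IsSelfAdjoint a)
    (h : ∀ f : H, (0 : A) ≤ ⟪f, a.S f⟫) : 0 ≤ a := by
  have hmcont : Continuous (fun r : ℝ => max (-r) 0) :=
    (continuous_neg.max continuous_const)
  have hqcont : Continuous (fun r : ℝ => max (-r) 0 * Real.sqrt (max (-r) 0)) :=
    hmcont.mul (Real.continuous_sqrt.comp hmcont)
  set n : AdjPair A H := cfc (fun r : ℝ => max (-r) 0) a with hn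
  set q : AdjPair A H := cfc (fun r : ℝ => max (-r) 0 * Real.sqrt (max (-r) 0)) a with hq
  have hn_sa : IsSelfAdjoint n := cfc_predicate _ _
  have hq_sa : IsSelfAdjoint q := cfc_predicate _ _
  -- n * a * n = -(q * q)
  have h1 : n * a * n = cfc (fun r : ℝ => max (-r) 0 * r * max (-r) 0) a := by
    conv_lhs => rw [← cfc_id ℝ a ha]
    rw [← cfc_mul _ _ a (hmcont.continuousOn) continuousOn_id,
      ← cfc_mul (fun x => max (-x) 0 * id x) _ a ((hmcont.mul continuous_id).continuousOn) (hmcont.continuousOn)]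
    simp only [id_eq]
  have h2 : q * q = cfc (fun r : ℝ =>
      (max (-r) 0 * Real.sqrt (max (-r) 0)) * (max (-r) 0 * Real.sqrt (max (-r) 0))) a := by
    rw [hq, ← cfc_mul _ _ a (hqcont.continuousOn) (hqcont.continuousOn)]
  have key_eq : n * a * n = -(q * q) := by
    rw [h1, h2, ← cfc_neg]
    apply cfc_congr
    intro x hx
    dsimp only
    have hm0 : (0:ℝ) ≤ max (-x) 0 := le_max_right _ _
    have hsq : Real.sqrt (max (-x) 0) * Real.sqrt (max (-x) 0) = max (-x) 0 :=
      Real.mul_self_sqrt hm0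
    rcases le_total x 0 with hx0 | hx0
    · have hmax : max (-x) 0 = -x := max_eq_left (neg_nonneg.mpr hx0)
      rw [hmax] at hsq ⊢
      linear_combination x ^ 2 * hsq
    · have hmax : max (-x) 0 = 0 := max_eq_right (neg_nonpos.mpr hx0)
      rw [hmax] at hsq ⊢
      simp
  -- weak positivity of n * a * n
  have hnadj : n.adj = n.S := adj_eq_S_of_sa hn_sa
  have hqadj : q.adj = q.S := adj_eq_S_of_sa hq_sa
  have hweak : ∀ f : H, (0 : A) ≤ ⟪f, (n * a * n).S f⟫ := by
    intro f
    have e1 : (n * a * n).S f = n.S (a.S (n.S f)) := rfl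
    have e2 : ⟪n.S f, a.S (n.S f)⟫ = ⟪f, n.S (a.S (n.S f))⟫ := by
      rw [n.spec f (a.S (n.S f)), hnadj]
    rw [e1, ← e2]
    exact h (n.S f)
  -- hence q.S f = 0 for all f
  have hq0 : q = 0 := by
    have hqq : ∀ f : H, q.S f = 0 := by
      intro f
      have e3 : ⟪f, (q * q).S f⟫ = ⟪q.S f, q.S f⟫ := by
        rw [q.spec f (q.S f), hqadj]
        rfl
      have l1 : (0 : A) ≤ -⟪f, (q * q).S f⟫ := by
        have := hweak f
        rw [key_eq] at this
        have e4 : ((-(q * q)).S) f = -((q * q).S f) := rfl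
        rw [e4] at this
        rw [CStarModuleOld.inner_neg_right] at this
        exact this
      have l2 : (0 : A) ≤ ⟪f, (q * q).S f⟫ := by
        rw [e3]; exact CStarModuleOld.inner_self_nonneg
      have : ⟪f, (q * q).S f⟫ = 0 :=
        le_antisymm (by simpa using neg_nonneg.mp (by simpa using l1)) l2
      rw [e3] at this
      exact CStarModuleOld.inner_self.mp this
    apply ext
    ext f
    exact hqq f
  -- n ^ 3 = q * q = 0, hence n = 0
  have hn3 : n * n * n = 0 := by
    have e5 : n * n * n = cfc (fun r : ℝ => max (-r) 0 * max (-r) 0 * max (-r) 0) a := by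
      rw [hn, ← cfc_mul _ _ a (hmcont.continuousOn) (hmcont.continuousOn),
        ← cfc_mul (fun x => max (-x) 0 * max (-x) 0) _ a ((hmcont.mul hmcont).continuousOn) (hmcont.continuousOn)]
    have e6 : n * n * n = q * q := by
      rw [e5, h2]
      apply cfc_congr
      intro x hx
      dsimp only
      have hm0 : (0:ℝ) ≤ max (-x) 0 := le_max_right _ _
      have hsq : Real.sqrt (max (-x) 0) * Real.sqrt (max (-x) 0) = max (-x) 0 :=
        Real.mul_self_sqrt hm0
      linear_combination (-((max (-x) 0) ^ 2)) * hsq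
    rw [e6, hq0, mul_zero]
  have hnzero : n = 0 := by
    have e7 : ‖n * n‖ = ‖n‖ * ‖n‖ := by
      have := CStarRing.norm_star_mul_self (x := n)
      rwa [hn_sa.star_eq] at this
    have hsa2 : star (n * n) = n * n := by rw [star_mul, hn_sa.star_eq]
    have e8 : ‖(n * n) * (n * n)‖ = ‖n * n‖ * ‖n * n‖ := by
      have := CStarRing.norm_star_mul_self (x := n * n)
      rwa [hsa2] at this
    have e9 : (n * n) * (n * n) = 0 := by
      calc (n * n) * (n * n) = ((n * n * n) * n) := by rw [← mul_assoc]
        _ = 0 := by rw [hn3, zero_mul]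
    have e10 : ‖n‖ * ‖n‖ * (‖n‖ * ‖n‖) = 0 := by
      rw [← e7, ← e8, e9, norm_zero]
    have : ‖n‖ = 0 := by
      by_contra hne
      have hpos : 0 < ‖n‖ := lt_of_le_of_ne (norm_nonneg n) (Ne.symm hne)
      nlinarith [e10, mul_pos hpos hpos, mul_pos (mul_pos hpos hpos) (mul_pos hpos hpos)]
    exact norm_eq_zero.mp this
  -- conclude
  have hfinal : a = cfc (fun r : ℝ => max r 0) a - n := by
    rw [hn, ← cfc_sub (fun r : ℝ => max r 0) (fun r : ℝ => max (-r) 0) a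
      ((continuous_id'.max continuous_const).continuousOn) (hmcont.continuousOn)]
    conv_lhs => rw [← cfc_id ℝ a ha]
    apply cfc_congr
    intro x hx
    dsimp only
    rcases le_total x 0 with hx0 | hx0
    · rw [max_eq_right hx0, max_eq_left (neg_nonneg.mpr hx0)]; simp
    · rw [max_eq_left hx0, max_eq_right (neg_nonpos.mpr hx0)]; simp
  rw [hfinal, hnzero, sub_zero]
  exact cfc_nonneg fun x hx => le_max_right _ _


/-- If `C` is selfadjoint and commutes with the adjoint of `T`, it commutes with `T`. -/
lemma comp_comm_of_comp_comm_adj {C T Ts : H →L[ℂ] H}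
    (hCsa : ∀ x y : H, ⟪C x, y⟫ = ⟪x, C y⟫)
    (hT : ∀ x y : H, ⟪T x, y⟫ = ⟪x, Ts y⟫)
    (hCTs : C.comp Ts = Ts.comp C) : C.comp T = T.comp C := by
  have hTs' : ∀ y : H, C (Ts y) = Ts (C y) := fun y => congrFun (congrArg DFunLike.coe hCTs) y
  ext v
  have key : ∀ y : H, ⟪C (T v) - T (C v), y⟫ = 0 := by
    intro y
    have c1 : ⟪C (T v), y⟫ = ⟪T v, C y⟫ := hCsa _ _
    have c2 : ⟪T v, C y⟫ = ⟪v, Ts (C y)⟫ := hT _ _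
    have c3 : ⟪v, Ts (C y)⟫ = ⟪v, C (Ts y)⟫ := by rw [hTs']
    have c4 : ⟪v, C (Ts y)⟫ = ⟪C v, Ts y⟫ := (hCsa _ _).symm
    have c5 : ⟪C v, Ts y⟫ = ⟪T (C v), y⟫ := (hT _ _).symm
    rw [CStarModuleOld.inner_sub_left, c1, c2, c3, c4, c5, sub_self]
  have hz := eq_zero_of_inner_left _ key
  have := sub_eq_zero.mp hz
  simpa using this

/-- The key inequality: multiplying a positive commuting operator inequality by `C`. -/
lemma key_ineq (K Ks M Ms C : H →L[ℂ] H)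
    (hK : ∀ x y : H, ⟪K x, y⟫ = ⟪x, Ks y⟫)
    (hM : ∀ x y : H, ⟪M x, y⟫ = ⟪x, Ms y⟫)
    (hCsa : ∀ x y : H, ⟪C x, y⟫ = ⟪x, C y⟫)
    (hCpos : ∀ x : H, (0 : A) ≤ ⟪x, C x⟫)
    (hCMs : C.comp Ms = Ms.comp C) (hCKs : C.comp Ks = Ks.comp C)
    (lam : ℝ)
    (hMMKK : ∀ f : H, ⟪f, M (Ms f)⟫ ≤ lam • ⟪f, K (Ks f)⟫) (f : H) :
    ⟪f, M (Ms (C f))⟫ ≤ lam • ⟪f, K (Ks (C f))⟫ := by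
  -- adjoint identities in starred form
  have hK' : ∀ x y : H, ⟪x, K y⟫ = ⟪Ks x, y⟫ := fun x y => by
    have := congrArg star (hK y x)
    simpa using this
  have hM' : ∀ x y : H, ⟪x, M y⟫ = ⟪Ms x, y⟫ := fun x y => by
    have := congrArg star (hM y x)
    simpa using this
  -- the operator X = lam • K Ks - M Ms
  set X : H →L[ℂ] H := lam • (K.comp Ks) - M.comp Ms with hX
  have hXapp : ∀ v : H, X v = lam • (K (Ks v)) - M (Ms v) := fun v => rfl
  have hXsa : ∀ u w : H, ⟪X u, w⟫ = ⟪u, X w⟫ := by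
    intro u w
    rw [hXapp, hXapp, CStarModuleOld.inner_sub_left, CStarModuleOld.inner_sub_right,
      inner_smul_left_real, inner_smul_right_real]
    congr 1
    · congr 1
      rw [hK, ← hK']
    · rw [hM, ← hM']
  -- elements of the C*-algebra of adjointable operators
  set x : AdjPair A H := ⟨X, X, hXsa⟩ with hxdef
  set c : AdjPair A H := ⟨C, C, hCsa⟩ with hcdef
  have hx_sa : IsSelfAdjoint x := rfl
  have hc_sa : IsSelfAdjoint c := rfl
  have hc_nonneg : (0 : AdjPair A H) ≤ c := nonneg_of_inner_nonneg hc_sa hCpos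
  have hx_nonneg : (0 : AdjPair A H) ≤ x := by
    apply nonneg_of_inner_nonneg hx_sa
    intro v
    have : ⟪v, x.S v⟫ = lam • ⟪v, K (Ks v)⟫ - ⟪v, M (Ms v)⟫ := by
      show ⟪v, X v⟫ = _
      rw [hXapp, CStarModuleOld.inner_sub_right, inner_smul_right_real]
    rw [this]
    exact sub_nonneg.mpr (hMMKK v)
  -- X commutes with C
  have hCK : C.comp K = K.comp C := comp_comm_of_comp_comm_adj hCsa hK hCKs
  have hCM : C.comp M = M.comp C := comp_comm_of_comp_comm_adj hCsa hM hCMs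
  have hXC : X.comp C = C.comp X := by
    ext v
    have e1 : K (Ks (C v)) = C (K (Ks v)) := by
      have h1 : Ks (C v) = C (Ks v) := (congrFun (congrArg DFunLike.coe hCKs) v).symm
      have h2 : K (C (Ks v)) = C (K (Ks v)) :=
        (congrFun (congrArg DFunLike.coe hCK) (Ks v)).symm
      rw [h1, h2]
    have e2 : M (Ms (C v)) = C (M (Ms v)) := by
      have h1 : Ms (C v) = C (Ms v) := (congrFun (congrArg DFunLike.coe hCMs) v).symm
      have h2 : M (C (Ms v)) = C (M (Ms v)) :=
        (congrFun (congrArg DFunLike.coe hCM) (Ms v)).symm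
      rw [h1, h2]
    show X (C v) = C (X v)
    rw [hXapp, hXapp, e1, e2, map_sub, C.map_smul_of_tower]
  have hcomm : Commute c x := by
    show c * x = x * c
    apply AdjPair.ext
    show C.comp X = X.comp C
    exact hXC.symm
  -- the square root of c
  set s : AdjPair A H := cfc Real.sqrt c with hs
  have hs_sa : IsSelfAdjoint s := cfc_predicate _ _
  have hss : s * s = c := by
    rw [hs, ← cfc_mul Real.sqrt Real.sqrt c
      (Real.continuous_sqrt.continuousOn) (Real.continuous_sqrt.continuousOn)]
    have h1 : cfc (fun r : ℝ => Real.sqrt r * Real.sqrt r) c = cfc (fun r : ℝ => r) c :=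
      cfc_congr fun r hr => Real.mul_self_sqrt (spectrum_nonneg_of_nonneg hc_nonneg hr)
    rw [h1]
    exact cfc_id ℝ c hc_sa
  have hxs : Commute x s := (commute_cfc_of_commute hc_sa hcomm Real.sqrt).symm
  -- x * c is positive
  have hxc_nonneg : (0 : AdjPair A H) ≤ x * c := by
    have h1 : x * c = star s * x * s := by
      rw [hs_sa.star_eq, ← hss, ← mul_assoc, hxs.eq]
    rw [h1]
    exact star_left_conjugate_nonneg hx_nonneg s
  -- translate back
  have hfin := inner_nonneg_of_nonneg hxc_nonneg f
  have e3 : ⟪f, (x * c).S f⟫ = lam • ⟪f, K (Ks (C f))⟫ - ⟪f, M (Ms (C f))⟫ := by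
    show ⟪f, X (C f)⟫ = _
    rw [hXapp, CStarModuleOld.inner_sub_right, inner_smul_right_real]
  rw [e3] at hfin
  exact sub_nonneg.mp hfin

end AdjPair

end KeyIneq

section Final

variable {A : Type*} [CStarAlgebra A] [PartialOrder A] [StarOrderedRing A]

lemma real_smul_nonneg {r : ℝ} (hr : 0 ≤ r) {x : A} (hx : 0 ≤ x) : 0 ≤ r • x := by
  set t := Real.sqrt r with ht
  have hu : star (t • (1 : A)) = t • 1 := by
    rw [star_smul, star_trivial, star_one]
  have h1 : star (t • (1 : A)) * x * (t • (1 : A)) = r • x := by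
    rw [hu, smul_mul_assoc, one_mul, mul_smul_comm, mul_one, smul_smul, ht,
      Real.mul_self_sqrt hr]
  exact h1 ▸ star_left_conjugate_nonneg hx _

lemma real_smul_le_smul {a b : A} (h : a ≤ b) {r : ℝ} (hr : 0 ≤ r) :
    r • a ≤ r • b := by
  rw [← sub_nonneg, ← smul_sub]
  exact real_smul_nonneg hr (sub_nonneg.mpr h)

end Final


/-- If `F` is a continuous `C`-controlled `K`-frame with bounds `A₀, B₀`,
`M ∈ End*_A(H)` with `R(M) ⊆ R(K)`, `R(K)` closed, and `C` commutes with `M*` and `K*`, then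
`F` is a continuous `C`-controlled `M`-frame with bounds `A₀/λ` and `B₀`, where `λ > 0`
satisfies `M M* ≤ λ K K*`. -/
theorem stmt9
    {A : Type*} [CStarAlgebra A] [PartialOrder A] [StarOrderedRing A]
    {H : Type*} [NormedAddCommGroup H] [NormedSpace ℂ H] [SMul Aᵐᵒᵖ H]
    [CStarModuleOld A H] [CompleteSpace H]
    {Ω : Type*} [MeasurableSpace Ω] (μ : Measure Ω)
    -- `K, M ∈ End*_A(H)` with adjoints `Ks, Ms`
    (K Ks M Ms : H →L[ℂ] H)
    (hK : ∀ x y : H, inner (𝕜 := A) (K x) y = inner (𝕜 := A) x (Ks y))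
    (hM : ∀ x y : H, inner (𝕜 := A) (M x) y = inner (𝕜 := A) x (Ms y))
    -- `C ∈ GL⁺(H)` with positive square root `Chalf`
    (C Cinv Chalf : H →L[ℂ] H)
    (hCinv₁ : C.comp Cinv = 1) (hCinv₂ : Cinv.comp C = 1)
    (hCsa : ∀ x y : H, inner (𝕜 := A) (C x) y = inner (𝕜 := A) x (C y))
    (hCpos : ∀ x : H, (0 : A) ≤ inner (𝕜 := A) x (C x))
    (hChalf : Chalf.comp Chalf = C)
    (hChalfsa : ∀ x y : H, inner (𝕜 := A) (Chalf x) y = inner (𝕜 := A) x (Chalf y))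
    (hChalfpos : ∀ x : H, (0 : A) ≤ inner (𝕜 := A) x (Chalf x))
    -- `C` commutes with `M*` and `K*`
    (hCMs : C.comp Ms = Ms.comp C) (hCKs : C.comp Ks = Ks.comp C)
    -- `R(M) ⊆ R(K)` with `R(K)` closed
    (hrange : Set.range M ⊆ Set.range K)
    (hclosed : IsClosed (Set.range K))
    -- `λ > 0` with `M M* ≤ λ K K*`
    (lam : ℝ) (hlam : 0 < lam)
    (hMMKK : ∀ f : H,
      inner (𝕜 := A) f (M (Ms f)) ≤ lam • inner (𝕜 := A) f (K (Ks f)))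
    -- `F` is a continuous `C`-controlled `K`-frame with bounds `A₀, B₀`
    (F : Ω → H)
    (hFmeas : ∀ f : H, StronglyMeasurable fun w => inner (𝕜 := A) f (F w))
    (A₀ B₀ : ℝ) (hA₀ : 0 < A₀) (hB₀ : 0 < B₀)
    (hframe : ∀ f : H,
      A₀ • inner (𝕜 := A) (Chalf (Ks f)) (Chalf (Ks f))
          ≤ (∫ w, inner (𝕜 := A) f (C (F w)) * inner (𝕜 := A) (F w) f ∂μ) ∧
      (∫ w, inner (𝕜 := A) f (C (F w)) * inner (𝕜 := A) (F w) f ∂μ)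
          ≤ B₀ • inner (𝕜 := A) f f) :
    -- `F` is a continuous `C`-controlled `M`-frame with bounds `A₀/λ` and `B₀`
    ∀ f : H,
      (A₀ / lam) • inner (𝕜 := A) (Chalf (Ms f)) (Chalf (Ms f))
          ≤ (∫ w, inner (𝕜 := A) f (C (F w)) * inner (𝕜 := A) (F w) f ∂μ) ∧
      (∫ w, inner (𝕜 := A) f (C (F w)) * inner (𝕜 := A) (F w) f ∂μ)
          ≤ B₀ • inner (𝕜 := A) f f := by
  intro f
  refine ⟨?_, (hframe f).2⟩
  -- starred adjoint identities
  have hK' : ∀ x y : H, inner (𝕜 := A) x (K y) = inner (𝕜 := A) (Ks x) y := fun x y => by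
    have := congrArg star (hK y x)
    simpa using this
  have hM' : ∀ x y : H, inner (𝕜 := A) x (M y) = inner (𝕜 := A) (Ms x) y := fun x y => by
    have := congrArg star (hM y x)
    simpa using this
  -- rewrite the controlled frame quantities
  have eM : inner (𝕜 := A) (Chalf (Ms f)) (Chalf (Ms f)) = inner (𝕜 := A) f (M (Ms (C f))) := by
    have s1 : inner (𝕜 := A) (Chalf (Ms f)) (Chalf (Ms f))
        = inner (𝕜 := A) (Ms f) (Chalf (Chalf (Ms f))) := hChalfsa _ _
    have s2 : Chalf (Chalf (Ms f)) = C (Ms f) := congrFun (congrArg DFunLike.coe hChalf) (Ms f)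
    have s3 : C (Ms f) = Ms (C f) := congrFun (congrArg DFunLike.coe hCMs) f
    have s4 : inner (𝕜 := A) (Ms f) (Ms (C f)) = inner (𝕜 := A) f (M (Ms (C f))) :=
      (hM' f (Ms (C f))).symm
    rw [s1, s2, s3, s4]
  have eK : inner (𝕜 := A) (Chalf (Ks f)) (Chalf (Ks f)) = inner (𝕜 := A) f (K (Ks (C f))) := by
    have s1 : inner (𝕜 := A) (Chalf (Ks f)) (Chalf (Ks f))
        = inner (𝕜 := A) (Ks f) (Chalf (Chalf (Ks f))) := hChalfsa _ _
    have s2 : Chalf (Chalf (Ks f)) = C (Ks f) := congrFun (congrArg DFunLike.coe hChalf) (Ks f)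
    have s3 : C (Ks f) = Ks (C f) := congrFun (congrArg DFunLike.coe hCKs) f
    have s4 : inner (𝕜 := A) (Ks f) (Ks (C f)) = inner (𝕜 := A) f (K (Ks (C f))) :=
      (hK' f (Ks (C f))).symm
    rw [s1, s2, s3, s4]
  -- the key inequality
  have hkey := AdjPair.key_ineq (A := A) (H := H) K Ks M Ms C hK hM hCsa hCpos hCMs hCKs
    lam hMMKK f
  rw [← eM, ← eK] at hkey
  -- combine with the frame lower bound
  have step1 : (A₀ / lam) • inner (𝕜 := A) (Chalf (Ms f)) (Chalf (Ms f))
      ≤ (A₀ / lam) • (lam • inner (𝕜 := A) (Chalf (Ks f)) (Chalf (Ks f))) :=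
    real_smul_le_smul hkey (le_of_lt (div_pos hA₀ hlam))
  have step2 : (A₀ / lam) • (lam • inner (𝕜 := A) (Chalf (Ks f)) (Chalf (Ks f)))
      = A₀ • inner (𝕜 := A) (Chalf (Ks f)) (Chalf (Ks f)) := by
    rw [smul_smul, div_mul_cancel₀ A₀ (ne_of_gt hlam)]
  exact step1.trans (step2 ▸ (hframe f).1)
end

section
/- Let H and K be Hilbert C*-modules over a C*-algebra A and T ∈ End*_A(H,K) adjointable. Then T is surjective if and only if T* is bounded below with respect to the inner product, i.e. there exists m' > 0 such that ⟨T*x,T*x⟩ ≥ m'⟨x,x⟩ for all x ∈ K; and this is also equivalent to T* being bounded below in norm: ‖T*x‖ ≥ m‖x‖ for some m > 0 and all x ∈ K. -/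
/-- The December 2024 Mathlib `CStarModule`: a Hilbert C⋆-module with a *right* `A`-action
(Mathlib's `CStarModule` now uses a left action `[SMul A E]` with other axioms). -/
class CStarModuleRight (A E : Type*) [NonUnitalSemiring A] [StarRing A] [Module ℂ A]
    [AddCommGroup E] [Module ℂ E] [PartialOrder A] [SMul Aᵐᵒᵖ E] [Norm A] [Norm E]
    extends Inner A E where
  inner_add_right {x} {y} {z} : inner x (y + z) = inner x y + inner x z
  inner_self_nonneg {x} : 0 ≤ inner x x
  inner_self {x} : inner x x = 0 ↔ x = 0
  inner_op_smul_right {a : A} {x y : E} : inner x (MulOpposite.op a • y) = inner x y * a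
  inner_smul_right_complex {z : ℂ} {x} {y} : inner x (z • y) = z • inner x y
  star_inner x y : star (inner x y) = inner y x
  norm_eq_sqrt_norm_inner_self x : ‖x‖ = √‖inner x x‖

namespace CStarModuleRight

section general

variable {A E : Type*} [NonUnitalRing A] [StarRing A] [AddCommGroup E] [Module ℂ A]
  [Module ℂ E] [PartialOrder A] [SMul Aᵐᵒᵖ E] [Norm A] [Norm E] [CStarModuleRight A E]

local notation "⟪" x ", " y "⟫" => inner A x y

lemma inner_add_left {x y z : E} : ⟪x + y, z⟫ = ⟪x, z⟫ + ⟪y, z⟫ := by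
  rw [← star_star (r := ⟪x + y, z⟫)]
  simp only [inner_add_right, star_add, star_inner]

lemma inner_op_smul_left {a : A} {x y : E} : ⟪MulOpposite.op a • x, y⟫ = star a * ⟪x, y⟫ := by
  rw [← star_inner, inner_op_smul_right, star_mul, star_inner]

variable [StarModule ℂ A]

lemma inner_smul_left_complex {z : ℂ} {x y : E} : ⟪z • x, y⟫ = star z • ⟪x, y⟫ := by
  rw [← star_inner, inner_smul_right_complex, star_smul, star_inner]

lemma inner_smul_left_real {z : ℝ} {x y : E} : ⟪z • x, y⟫ = z • ⟪x, y⟫ := by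
  have h₁ : z • x = (z : ℂ) • x := by simp
  rw [h₁, inner_smul_left_complex]
  simp

lemma inner_smul_right_real {z : ℝ} {x y : E} : ⟪x, z • y⟫ = z • ⟪x, y⟫ := by
  have h₁ : z • y = (z : ℂ) • y := by simp
  rw [h₁, inner_smul_right_complex]
  simp

/-- The function `⟨x, y⟩ ↦ ⟪x, y⟫` bundled as a sesquilinear map. -/
def innerₛₗ : E →ₗ⋆[ℂ] E →ₗ[ℂ] A where
  toFun x := { toFun := fun y => ⟪x, y⟫
               map_add' := fun z y => by simp [inner_add_right]
               map_smul' := fun z y => by simp [inner_smul_right_complex] }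
  map_add' z y := by ext; simp [inner_add_left]
  map_smul' z y := by ext; simp [inner_smul_left_complex]

lemma innerₛₗ_apply {x y : E} : innerₛₗ x y = ⟪x, y⟫ := rfl

lemma inner_zero_right {x : E} : ⟪x, 0⟫ = 0 := by simp [← innerₛₗ_apply]
lemma inner_zero_left {x : E} : ⟪0, x⟫ = 0 := by simp [← innerₛₗ_apply]
lemma inner_sub_right {x y z : E} : ⟪x, y - z⟫ = ⟪x, y⟫ - ⟪x, z⟫ := by
  simp [← innerₛₗ_apply]
lemma inner_sub_left {x y z : E} : ⟪x - y, z⟫ = ⟪x, z⟫ - ⟪y, z⟫ := by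
  simp [← innerₛₗ_apply]

end general

section norm

variable {A E : Type*} [NonUnitalCStarAlgebra A] [PartialOrder A] [AddCommGroup E]
  [Module ℂ E] [SMul Aᵐᵒᵖ E] [Norm E] [CStarModuleRight A E]

local notation "⟪" x ", " y "⟫" => inner A x y

lemma norm_sq_eq {x : E} : ‖x‖ ^ 2 = ‖⟪x, x⟫‖ := by
  simp [norm_eq_sqrt_norm_inner_self (A := A)]

variable [StarOrderedRing A]

lemma inner_mul_inner_swap_le {x y : E} : ⟪y, x⟫ * ⟪x, y⟫ ≤ ‖x‖ ^ 2 • ⟪y, y⟫ := by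
  rcases eq_or_ne x 0 with h | h
  · simp [h, norm_eq_sqrt_norm_inner_self (A := A) (0 : E), inner_zero_left, inner_zero_right]
  · have hxpos : 0 < ‖x‖ := by
      rw [norm_eq_sqrt_norm_inner_self (A := A)]
      exact Real.sqrt_pos.mpr (norm_pos_iff.mpr (fun H => h (inner_self.mp H)))
    have h₁ : ∀ (a : A),
        (0 : A) ≤ ‖x‖ ^ 2 • (star a * a) - ‖x‖ ^ 2 • (star a * ⟪x, y⟫)
                  - ‖x‖ ^ 2 • (⟪y, x⟫ * a) + ‖x‖ ^ 2 • (‖x‖ ^ 2 • ⟪y, y⟫) := fun a => by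
      calc (0 : A) ≤ ⟪MulOpposite.op a • x - ‖x‖ ^ 2 • y, MulOpposite.op a • x - ‖x‖ ^ 2 • y⟫ := by
                      exact inner_self_nonneg
            _ = star a * (⟪x, x⟫ * a) - ‖x‖ ^ 2 • (star a * ⟪x, y⟫)
                  - ‖x‖ ^ 2 • (⟪y, x⟫ * a) + ‖x‖ ^ 2 • (‖x‖ ^ 2 • ⟪y, y⟫) := by
                      simp only [inner_sub_right, inner_op_smul_right, inner_sub_left,
                        inner_op_smul_left, inner_smul_left_real, mul_sub, mul_smul_comm,
                        inner_smul_right_real, smul_sub, smul_mul_assoc, sub_mul, mul_assoc]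
                      abel
            _ ≤ ‖x‖ ^ 2 • (star a * a) - ‖x‖ ^ 2 • (star a * ⟪x, y⟫)
                  - ‖x‖ ^ 2 • (⟪y, x⟫ * a) + ‖x‖ ^ 2 • (‖x‖ ^ 2 • ⟪y, y⟫) := by
                      gcongr
                      calc _ = star a * ⟪x, x⟫ * a := (mul_assoc _ _ _).symm
                        _ ≤ ‖⟪x, x⟫‖ • (star a * a) :=
                          CStarAlgebra.star_left_conjugate_le_norm_smul (star_inner x x)
                        _ = (√‖⟪x, x⟫‖) ^ 2 • (star a * a) := by
                          rw [Real.sq_sqrt]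
                          positivity
                        _ = ‖x‖ ^ 2 • (star a * a) := by rw [← norm_eq_sqrt_norm_inner_self]
    specialize h₁ ⟪x, y⟫
    simp only [star_inner, sub_self, zero_sub, le_neg_add_iff_add_le, add_zero] at h₁
    rwa [smul_le_smul_iff_of_pos_left (pow_pos hxpos _)] at h₁

variable (E) in
lemma norm_inner_le {x y : E} : ‖⟪x, y⟫‖ ≤ ‖x‖ * ‖y‖ := by
  have := calc ‖⟪x, y⟫‖ ^ 2 = ‖⟪y, x⟫ * ⟪x, y⟫‖ := by
                rw [← star_inner x y, CStarRing.norm_star_mul_self, pow_two]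
    _ ≤ ‖‖x‖ ^ 2 • ⟪y, y⟫‖ := by
                refine CStarAlgebra.norm_le_norm_of_nonneg_of_le ?_ inner_mul_inner_swap_le
                rw [← star_inner x y]
                exact star_mul_self_nonneg ⟪x, y⟫
    _ = ‖x‖ ^ 2 * ‖⟪y, y⟫‖ := by simp [norm_smul]
    _ = ‖x‖ ^ 2 * ‖y‖ ^ 2 := by
                simp only [norm_eq_sqrt_norm_inner_self (A := A), norm_nonneg, Real.sq_sqrt]
    _ = (‖x‖ * ‖y‖) ^ 2 := by simp only [mul_pow]
  refine (pow_le_pow_iff_left₀ (norm_nonneg ⟪x, y⟫) ?_ (by simp)).mp this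
  exact mul_nonneg (by rw [norm_eq_sqrt_norm_inner_self (A := A) x]; positivity)
    (by rw [norm_eq_sqrt_norm_inner_self (A := A) y]; positivity)

end norm

section NormedAddCommGroup

variable {A E : Type*} [NonUnitalCStarAlgebra A] [PartialOrder A] [StarOrderedRing A]
  [SMul Aᵐᵒᵖ E] [NormedAddCommGroup E] [NormedSpace ℂ E] [CStarModuleRight A E]

/-- The function `⟨x, y⟩ ↦ ⟪x, y⟫` bundled as a continuous sesquilinear map. -/
noncomputable def innerSL : E →L⋆[ℂ] E →L[ℂ] A :=
  LinearMap.mkContinuous₂ (innerₛₗ : E →ₗ⋆[ℂ] E →ₗ[ℂ] A) 1 <| fun x y => by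
    simp [innerₛₗ_apply, norm_inner_le E]

lemma innerSL_apply {x y : E} : innerSL x y = inner A x y := rfl

lemma continuous_inner : Continuous (fun x : E × E => inner A x.1 x.2) := by
  simp_rw [← innerSL_apply]
  fun_prop

end NormedAddCommGroup

end CStarModuleRight

open CStarModuleRight

set_option linter.unusedSectionVars false
set_option maxHeartbeats 1000000
set_option synthInstance.maxHeartbeats 200000

section Adj

variable {A : Type*} [CStarAlgebra A] [PartialOrder A] [StarOrderedRing A]
variable {K : Type*} [NormedAddCommGroup K] [NormedSpace ℂ K] [SMul Aᵐᵒᵖ K]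
  [CStarModuleRight A K] [CompleteSpace K]

local notation "⟪" x ", " y "⟫" => inner (𝕜 := A) x y

/-- `S'` is an adjoint of `S`. -/
def AdjPair_s15 (S S' : K →L[ℂ] K) : Prop := ∀ x y : K, ⟪S x, y⟫ = ⟪x, S' y⟫

variable {S S' T T' : K →L[ℂ] K}

lemma AdjPair_s15.symm (h : AdjPair_s15 (A := A) S S') : AdjPair_s15 (A := A) S' S := by
  intro x y
  calc ⟪S' x, y⟫ = star ⟪y, S' x⟫ := by rw [star_inner]
    _ = star ⟪S y, x⟫ := by rw [h]
    _ = ⟪x, S y⟫ := by rw [star_inner]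

lemma adjExtInner {a b : K} (h : ∀ x : K, ⟪x, a⟫ = ⟪x, b⟫) : a = b := by
  have h2 : ⟪a - b, a - b⟫ = 0 := by
    rw [CStarModuleRight.inner_sub_right, h (a - b), sub_self]
  exact sub_eq_zero.mp ((CStarModuleRight.inner_self).mp h2)

lemma AdjPair_s15.unique (h : AdjPair_s15 (A := A) S S') (h2 : AdjPair_s15 (A := A) S T') : S' = T' := by
  ext y
  exact adjExtInner fun x => (h x y).symm.trans (h2 x y)

lemma AdjPair_s15.norm_apply_le (h : AdjPair_s15 (A := A) S S') (x : K) : ‖S' x‖ ≤ ‖S‖ * ‖x‖ := by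
  rcases eq_or_ne (S' x) 0 with hx | hx
  · rw [hx, norm_zero]; exact mul_nonneg (norm_nonneg _) (norm_nonneg _)
  · have h1 : ‖S' x‖ ^ 2 = ‖⟪S' x, S' x⟫‖ := norm_sq_eq
    have h2 : ⟪S' x, S' x⟫ = ⟪x, S (S' x)⟫ := h.symm x (S' x)
    have h3 : ‖⟪x, S (S' x)⟫‖ ≤ ‖x‖ * ‖S (S' x)‖ := norm_inner_le K
    have h4 : ‖S (S' x)‖ ≤ ‖S‖ * ‖S' x‖ := S.le_opNorm _
    have h5 : ‖S' x‖ ^ 2 ≤ ‖x‖ * (‖S‖ * ‖S' x‖) := by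
      rw [h1, h2]
      exact h3.trans (by gcongr)
    have hpos : 0 < ‖S' x‖ := norm_pos_iff.mpr hx
    nlinarith
  done

lemma AdjPair_s15.norm_le (h : AdjPair_s15 (A := A) S S') : ‖S'‖ ≤ ‖S‖ :=
  S'.opNorm_le_bound (norm_nonneg S) h.norm_apply_le

variable (A K) in
/-- The subalgebra of adjointable operators on `K`. -/
def adjAlg : Subalgebra ℂ (K →L[ℂ] K) where
  carrier := {S | ∃ S', AdjPair_s15 (A := A) S S'}
  mul_mem' := by
    rintro a b ⟨a', ha⟩ ⟨b', hb⟩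
    exact ⟨b' * a', fun x y => by
      simp only [ContinuousLinearMap.mul_apply]
      rw [ha, hb]⟩
  add_mem' := by
    rintro a b ⟨a', ha⟩ ⟨b', hb⟩
    exact ⟨a' + b', fun x y => by
      simp only [ContinuousLinearMap.add_apply, CStarModuleRight.inner_add_left, CStarModuleRight.inner_add_right, ha, hb]
      rw [ha, hb]⟩
  algebraMap_mem' := fun c => ⟨(starRingEnd ℂ c) • 1, fun x y => by
    simp only [Algebra.algebraMap_eq_smul_one, ContinuousLinearMap.smul_apply,
      ContinuousLinearMap.one_apply, inner_smul_left_complex, inner_smul_right_complex]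
    rfl⟩

namespace adjAlg

/-- The adjoint of an adjointable operator. -/
noncomputable def adj (S : adjAlg A K) : K →L[ℂ] K := S.2.choose

lemma adj_spec (S : adjAlg A K) : AdjPair_s15 (A := A) S.1 (adj S) := S.2.choose_spec

lemma mem_adjAlg_of_pair (h : AdjPair_s15 (A := A) S S') : S ∈ adjAlg A K := ⟨S', h⟩

noncomputable instance : Star (adjAlg A K) :=
  ⟨fun S => ⟨adj S, mem_adjAlg_of_pair (adj_spec S).symm⟩⟩

lemma star_val (S : adjAlg A K) : (star S).1 = adj S := rfl

lemma star_pair (S : adjAlg A K) : AdjPair_s15 (A := A) S.1 (star S).1 := adj_spec S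

lemma star_eq_of_pair {S : adjAlg A K} {S' : K →L[ℂ] K} (h : AdjPair_s15 (A := A) S.1 S') :
    (star S).1 = S' := (star_pair S).unique h

noncomputable instance : StarRing (adjAlg A K) where
  star_involutive S := Subtype.ext <| star_eq_of_pair (star_pair S).symm
  star_mul S T := Subtype.ext <| star_eq_of_pair <| by
    intro x y
    show ⟪(S.1 * T.1) x, y⟫ = ⟪x, ((star T).1 * (star S).1) y⟫
    simp only [ContinuousLinearMap.mul_apply]
    rw [star_pair S, star_pair T]
  star_add S T := Subtype.ext <| star_eq_of_pair <| by
    intro x y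
    show ⟪(S.1 + T.1) x, y⟫ = ⟪x, ((star S).1 + (star T).1) y⟫
    simp only [ContinuousLinearMap.add_apply, CStarModuleRight.inner_add_left,
      CStarModuleRight.inner_add_right]
    rw [star_pair S, star_pair T]

noncomputable instance : StarModule ℂ (adjAlg A K) where
  star_smul c S := Subtype.ext <| star_eq_of_pair <| by
    intro x y
    show ⟪(c • S.1) x, y⟫ = ⟪x, (star c • (star S).1) y⟫
    simp only [ContinuousLinearMap.smul_apply, inner_smul_left_complex,
      inner_smul_right_complex]
    rw [star_pair S]

lemma isClosed_adjAlg : IsClosed ((adjAlg A K : Set (K →L[ℂ] K))) := by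
  rw [← isSeqClosed_iff_isClosed]
  intro u S hu hlim
  choose v hv using hu
  have hdiff : ∀ n m, AdjPair_s15 (A := A) (u n - u m) (v n - v m) := fun n m x y => by
    simp only [ContinuousLinearMap.sub_apply, CStarModuleRight.inner_sub_left,
      CStarModuleRight.inner_sub_right, hv n x y, hv m x y]
  have hcau : CauchySeq v := by
    rw [Metric.cauchySeq_iff]
    have hu' : CauchySeq u := hlim.cauchySeq
    rw [Metric.cauchySeq_iff] at hu'
    intro ε hε
    obtain ⟨N, hN⟩ := hu' ε hε
    refine ⟨N, fun n hn m hm => ?_⟩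
    have := (hdiff n m).norm_le
    calc dist (v n) (v m) = ‖v n - v m‖ := dist_eq_norm _ _
      _ ≤ ‖u n - u m‖ := this
      _ = dist (u n) (u m) := (dist_eq_norm _ _).symm
      _ < ε := hN n hn m hm
  obtain ⟨S', hS'⟩ := cauchySeq_tendsto_of_complete hcau
  have key : ∀ (w : ℕ → K →L[ℂ] K) (W : K →L[ℂ] K), Filter.Tendsto w Filter.atTop (nhds W) →
      ∀ z : K, Filter.Tendsto (fun n => w n z) Filter.atTop (nhds (W z)) := by
    intro w W hw z
    rw [tendsto_iff_norm_sub_tendsto_zero] at hw ⊢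
    have hb : ∀ n, ‖w n z - W z‖ ≤ ‖w n - W‖ * ‖z‖ := fun n =>
      ((w n - W).le_opNorm z)
    have : Filter.Tendsto (fun n => ‖w n - W‖ * ‖z‖) Filter.atTop (nhds 0) := by
      simpa using hw.mul_const ‖z‖
    exact squeeze_zero (fun n => norm_nonneg _) hb this
  refine ⟨S', fun x y => ?_⟩
  have hL : Filter.Tendsto (fun n => ⟪(u n) x, y⟫) Filter.atTop (nhds ⟪S x, y⟫) :=
    ((CStarModuleRight.continuous_inner (A := A) (E := K)).tendsto (S x, y)).comp
      ((key u S hlim x).prodMk_nhds tendsto_const_nhds)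
  have hR : Filter.Tendsto (fun n => ⟪x, (v n) y⟫) Filter.atTop (nhds ⟪x, S' y⟫) :=
    ((CStarModuleRight.continuous_inner (A := A) (E := K)).tendsto (x, S' y)).comp
      (tendsto_const_nhds.prodMk_nhds (key v S' hS' y))
  have : (fun n => ⟪(u n) x, y⟫) = fun n => ⟪x, (v n) y⟫ := funext fun n => hv n x y
  rw [this] at hL
  exact tendsto_nhds_unique hL hR

instance : CompleteSpace (adjAlg A K) := isClosed_adjAlg.completeSpace_coe

lemma val_norm (S : adjAlg A K) : ‖S‖ = ‖S.1‖ := rfl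

lemma val_mul (S T : adjAlg A K) : (S * T).1 = S.1 * T.1 := rfl

noncomputable instance : CStarRing (adjAlg A K) where
  norm_mul_self_le S := by
    set N := ‖star S * S‖ with hN
    have hN0 : 0 ≤ N := norm_nonneg _
    have key : ∀ x : K, ‖S.1 x‖ ≤ Real.sqrt N * ‖x‖ := by
      intro x
      have h1 : ‖S.1 x‖ ^ 2 = ‖⟪S.1 x, S.1 x⟫‖ := norm_sq_eq
      have h2 : ⟪S.1 x, S.1 x⟫ = ⟪x, (star S * S).1 x⟫ := star_pair S x (S.1 x)
      have h3 : ‖⟪x, (star S * S).1 x⟫‖ ≤ ‖x‖ * ‖(star S * S).1 x‖ := norm_inner_le K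
      have h4 : ‖(star S * S).1 x‖ ≤ N * ‖x‖ := (star S * S).1.le_opNorm x
      have h5 : ‖S.1 x‖ ^ 2 ≤ N * ‖x‖ ^ 2 := by
        rw [h1, h2]
        calc ‖⟪x, (star S * S).1 x⟫‖ ≤ ‖x‖ * (N * ‖x‖) := h3.trans (by gcongr)
          _ = N * ‖x‖ ^ 2 := by ring
      have h6 : ‖S.1 x‖ = Real.sqrt (‖S.1 x‖ ^ 2) := by
        rw [Real.sqrt_sq (norm_nonneg _)]
      rw [h6]
      calc Real.sqrt (‖S.1 x‖ ^ 2) ≤ Real.sqrt (N * ‖x‖ ^ 2) := Real.sqrt_le_sqrt h5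
        _ = Real.sqrt N * ‖x‖ := by
            rw [Real.sqrt_mul hN0, Real.sqrt_sq (norm_nonneg _)]
    have hS : ‖S‖ ≤ Real.sqrt N := S.1.opNorm_le_bound (Real.sqrt_nonneg _) key
    calc ‖S‖ * ‖S‖ ≤ Real.sqrt N * Real.sqrt N := by
          exact mul_le_mul hS hS (norm_nonneg _) (Real.sqrt_nonneg _)
      _ = N := Real.mul_self_sqrt hN0

noncomputable instance : CStarAlgebra (adjAlg A K) :=
  { (inferInstance : NormedRing (adjAlg A K)),
    (inferInstance : StarRing (adjAlg A K)),
    (inferInstance : CompleteSpace (adjAlg A K)),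
    (inferInstance : CStarRing (adjAlg A K)),
    (inferInstance : NormedAlgebra ℂ (adjAlg A K)),
    (inferInstance : StarModule ℂ (adjAlg A K)) with }

lemma isUnit_of_boundedBelow [Nontrivial K] {S : adjAlg A K} (hsa : IsSelfAdjoint S)
    {c : ℝ} (hc : 0 < c) (hb : ∀ x : K, c * ‖x‖ ≤ ‖S.1 x‖) : IsUnit S := by
  haveI : NormOneClass (adjAlg A K) :=
    ⟨by show ‖(1 : K →L[ℂ] K)‖ = 1; exact ContinuousLinearMap.norm_id⟩
  by_contra hS
  have h0 : (0 : ℂ) ∈ spectrum ℂ S := (spectrum.zero_mem_iff (R := ℂ)).mpr hS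
  set t : ℝ := c / 4 with ht_def
  have ht : 0 < t := by positivity
  set z : ℂ := (t : ℂ) * Complex.I with hz_def
  have hz0 : z ≠ 0 := by
    rw [hz_def]
    exact mul_ne_zero (by exact_mod_cast ht.ne') Complex.I_ne_zero
  have hznorm : ‖z‖ = t := by
    rw [hz_def, norm_mul, Complex.norm_I, Complex.norm_real, mul_one,
      Real.norm_of_nonneg ht.le]
  have hznot : z ∉ spectrum ℂ S := by
    intro h
    have h1 : z = (z.re : ℂ) := hsa.mem_spectrum_eq_re h
    have h2 : z.re = 0 := by simp [hz_def]
    rw [h2] at h1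
    exact hz0 (by simpa using h1)
  have hU : IsUnit (algebraMap ℂ (adjAlg A K) z - S) := spectrum.notMem_iff.mp hznot
  obtain ⟨u, hu⟩ := hU
  have hzmem : z ∈ spectrum ℂ (algebraMap ℂ (adjAlg A K) z - S) := by
    rw [← spectrum.singleton_sub_eq]
    have := Set.sub_mem_sub (Set.mem_singleton z) h0
    simpa using this
  set r : ℂˣ := Units.mk0 z hz0 with hr_def
  have hrmem : (↑r : ℂ) ∈ spectrum ℂ ((↑u : adjAlg A K)) := by rw [hu]; exact hzmem
  have hinv : (↑r⁻¹ : ℂ) ∈ spectrum ℂ ((↑u⁻¹ : adjAlg A K)) := spectrum.inv_mem_iff.mp hrmem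
  set V : adjAlg A K := ↑u⁻¹ with hV_def
  have hVnorm : t⁻¹ ≤ ‖V‖ := by
    have h3 := spectrum.norm_le_norm_of_mem hinv
    have h4 : ‖(↑r⁻¹ : ℂ)‖ = t⁻¹ := by
      rw [← hznorm]
      simp [hr_def]
    rw [h4] at h3
    exact h3
  have hSV : ‖(S * V)‖ ≤ t * ‖V‖ + 1 := by
    have h5 : (algebraMap ℂ (adjAlg A K) z - S) * V = 1 := by rw [← hu, hV_def]; exact u.mul_inv
    have h6 : S * V = z • V - 1 := by
      have h7 : algebraMap ℂ (adjAlg A K) z * V = z • V := (Algebra.smul_def z V).symm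
      have h8 : algebraMap ℂ (adjAlg A K) z * V - S * V = 1 := by rw [← h5, sub_mul]
      rw [← h7, eq_sub_iff_add_eq, ← h8]
      abel
    rw [h6]
    calc ‖z • V - 1‖ ≤ ‖z • V‖ + ‖(1 : adjAlg A K)‖ := norm_sub_le _ _
      _ = t * ‖V‖ + 1 := by rw [norm_smul, hznorm, norm_one]
  have hcV : c * ‖V‖ ≤ ‖(S * V)‖ := by
    have h9 : ‖V‖ ≤ c⁻¹ * ‖(S * V)‖ := by
      rw [val_norm V]
      apply ContinuousLinearMap.opNorm_le_bound _ (by positivity)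
      intro x
      have h10 : c * ‖V.1 x‖ ≤ ‖(S * V).1 x‖ := hb (V.1 x)
      have h11 : ‖(S * V).1 x‖ ≤ ‖(S * V)‖ * ‖x‖ := (S * V).1.le_opNorm x
      have h12 : c * ‖V.1 x‖ ≤ ‖(S * V)‖ * ‖x‖ := h10.trans h11
      calc ‖V.1 x‖ = c⁻¹ * (c * ‖V.1 x‖) := by field_simp
        _ ≤ c⁻¹ * (‖(S * V)‖ * ‖x‖) := by gcongr
        _ = c⁻¹ * ‖(S * V)‖ * ‖x‖ := by ring
    calc c * ‖V‖ ≤ c * (c⁻¹ * ‖(S * V)‖) := by gcongr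
      _ = ‖(S * V)‖ := by field_simp
  have hVpos : (4 : ℝ) / c ≤ ‖V‖ := by
    rw [ht_def] at hVnorm
    calc (4 : ℝ) / c = (c / 4)⁻¹ := by field_simp
      _ ≤ ‖V‖ := hVnorm
  rw [ht_def] at hSV
  have hf1 : (3 / 4) * c * ‖V‖ ≤ 1 := by nlinarith [hcV, hSV]
  have hf2 : (3 / 4) * c * (4 / c) ≤ (3 / 4) * c * ‖V‖ := by
    have : (0:ℝ) ≤ (3 / 4) * c := by positivity
    exact mul_le_mul_of_nonneg_left hVpos this
  have hf3 : (3 / 4) * c * (4 / c) = 3 := by field_simp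
  linarith

lemma algebraMap_real_val_apply (r : ℝ) (x : K) :
    ((algebraMap ℝ (adjAlg A K) r) : K →L[ℂ] K) x = (r : ℂ) • x := by
  rw [IsScalarTower.algebraMap_apply ℝ ℂ (adjAlg A K)]
  simp [Algebra.algebraMap_eq_smul_one]

theorem main_aux {H : Type*} [NormedAddCommGroup H] [NormedSpace ℂ H] [SMul Aᵐᵒᵖ H]
    [CStarModuleRight A H] [CompleteSpace H] [Nontrivial K]
    (T : H →L[ℂ] K) (Ts : K →L[ℂ] H)
    (hT : ∀ (x : H) (y : K), inner (𝕜 := A) (T x) y = inner (𝕜 := A) x (Ts y))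
    {m : ℝ} (hm : 0 < m) (hb : ∀ x : K, m * ‖x‖ ≤ ‖Ts x‖) :
    Function.Surjective T ∧ ∃ m' : ℝ, 0 < m' ∧
      ∀ x : K, m' • inner (𝕜 := A) x x ≤ inner (𝕜 := A) (Ts x) (Ts x) := by
  haveI : NormOneClass (adjAlg A K) :=
    ⟨by show ‖(1 : K →L[ℂ] K)‖ = 1; exact ContinuousLinearMap.norm_id⟩
  set S₀ : K →L[ℂ] K := T.comp Ts with hS₀
  have pair : AdjPair_s15 (A := A) S₀ S₀ := by
    intro x y
    show ⟪T (Ts x), y⟫ = ⟪x, T (Ts y)⟫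
    calc ⟪T (Ts x), y⟫ = ⟪Ts x, Ts y⟫ := hT _ _
      _ = star ⟪Ts y, Ts x⟫ := (star_inner _ _).symm
      _ = star ⟪T (Ts y), x⟫ := by rw [hT]
      _ = ⟪x, T (Ts y)⟫ := star_inner _ _
  set S : adjAlg A K := ⟨S₀, mem_adjAlg_of_pair pair⟩ with hS
  have hsa : IsSelfAdjoint S := Subtype.ext (star_eq_of_pair pair)
  have hinner : ∀ x : K, ⟪S.1 x, x⟫ = ⟪Ts x, Ts x⟫ := fun x => hT (Ts x) x
  have hinner' : ∀ x : K, ⟪x, S.1 x⟫ = ⟪Ts x, Ts x⟫ := fun x => by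
    rw [← star_inner (S.1 x), hinner, star_inner]
  have hnormTs : ∀ x : K, m ^ 2 * ‖x‖ ^ 2 ≤ ‖⟪Ts x, Ts x⟫‖ := by
    intro x
    have h1 : ‖Ts x‖ ^ 2 = ‖⟪Ts x, Ts x⟫‖ := norm_sq_eq
    have h2 : (m * ‖x‖) ^ 2 ≤ ‖Ts x‖ ^ 2 := by
      have := hb x
      have h0 : 0 ≤ m * ‖x‖ := by positivity
      nlinarith
    rw [← h1]
    nlinarith
  have hbS : ∀ x : K, (m * m) * ‖x‖ ≤ ‖S.1 x‖ := by
    intro x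
    rcases eq_or_ne x 0 with rfl | hx
    · simp
    · have hxp : 0 < ‖x‖ := norm_pos_iff.mpr hx
      have h3 : ‖⟪S.1 x, x⟫‖ ≤ ‖S.1 x‖ * ‖x‖ := norm_inner_le K
      have h4 : m ^ 2 * ‖x‖ ^ 2 ≤ ‖⟪S.1 x, x⟫‖ := by rw [hinner]; exact hnormTs x
      nlinarith
  have hU : IsUnit S := isUnit_of_boundedBelow hsa (by positivity) hbS
  obtain ⟨u, hu⟩ := hU
  set V : adjAlg A K := ↑u⁻¹ with hV
  have hSV : S * V = 1 := by rw [← hu, hV]; exact u.mul_inv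
  have hsurj : Function.Surjective T := by
    intro y
    refine ⟨Ts (V.1 y), ?_⟩
    have := congrArg (fun W : adjAlg A K => W.1 y) hSV
    exact (by simpa using this : S.1 (V.1 y) = y)
  refine ⟨hsurj, ?_⟩
  -- the norm of V is positive
  have hVpos : 0 < ‖V‖ := by
    rcases eq_or_ne V 0 with h | h
    · exfalso
      rw [h, mul_zero] at hSV
      obtain ⟨x, hx⟩ := exists_ne (0 : K)
      have := congrArg (fun W : adjAlg A K => W.1 x) hSV
      simp at this
      exact hx this.symm
    · exact norm_pos_iff.mpr h
  set ε : ℝ := min (m * m / 2) ((2 * ‖V‖)⁻¹) with hε_def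
  have hε : 0 < ε := lt_min (by positivity) (by positivity)
  -- every element of the real spectrum of S is at least ε
  have hspec : ∀ ρ : ℝ, ρ ∈ spectrum ℝ S → ε ≤ ρ := by
    intro ρ hρ
    by_contra hlt
    push_neg at hlt
    rw [spectrum.mem_iff] at hρ
    apply hρ
    rcases le_or_gt ρ 0 with hρ0 | hρ0
    · -- in this case `S - ρ` is selfadjoint and bounded below
      set W : adjAlg A K := S - algebraMap ℝ (adjAlg A K) ρ with hW
      have hWsa : IsSelfAdjoint W := hsa.sub (IsSelfAdjoint.algebraMap _ (.all ρ))
      have hWval : ∀ x : K, W.1 x = S.1 x - (ρ : ℂ) • x := fun x => by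
        rw [hW]
        show S.1 x - ((algebraMap ℝ (adjAlg A K) ρ) : K →L[ℂ] K) x = _
        rw [algebraMap_real_val_apply]
      have hWb : ∀ x : K, (m * m) * ‖x‖ ≤ ‖W.1 x‖ := by
        intro x
        rcases eq_or_ne x 0 with rfl | hx
        · simp
        · have hxp : 0 < ‖x‖ := norm_pos_iff.mpr hx
          have hWin : ⟪W.1 x, x⟫ = ⟪Ts x, Ts x⟫ + (-ρ) • ⟪x, x⟫ := by
            rw [hWval, CStarModuleRight.inner_sub_left, hinner, inner_smul_left_complex]
            rw [Complex.star_def, Complex.conj_ofReal, Complex.coe_smul]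
            rw [sub_eq_add_neg, ← neg_smul]
          have hposρ : (0 : A) ≤ (-ρ) • ⟪x, x⟫ := by
            have hrs : Real.sqrt (-ρ) * Real.sqrt (-ρ) = -ρ :=
              Real.mul_self_sqrt (by linarith)
            calc (0 : A) ≤ ⟪Real.sqrt (-ρ) • x, Real.sqrt (-ρ) • x⟫ :=
                  CStarModuleRight.inner_self_nonneg
              _ = (-ρ) • ⟪x, x⟫ := by
                  rw [inner_smul_left_real, inner_smul_right_real, smul_smul, hrs]
          have hle : ⟪Ts x, Ts x⟫ ≤ ⟪W.1 x, x⟫ := by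
            rw [hWin]
            exact le_add_of_nonneg_right hposρ
          have hnle : ‖⟪Ts x, Ts x⟫‖ ≤ ‖⟪W.1 x, x⟫‖ :=
            CStarAlgebra.norm_le_norm_of_nonneg_of_le CStarModuleRight.inner_self_nonneg hle
          have hCS : ‖⟪W.1 x, x⟫‖ ≤ ‖W.1 x‖ * ‖x‖ := norm_inner_le K
          have := hnormTs x
          nlinarith
      have hWU : IsUnit W := isUnit_of_boundedBelow hWsa (by positivity) hWb
      have : algebraMap ℝ (adjAlg A K) ρ - S = -W := by rw [hW, neg_sub]
      rw [this]
      exact hWU.neg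
    · -- in this case use a Neumann series argument
      set aρ : adjAlg A K := algebraMap ℝ (adjAlg A K) ρ with haρ
      have hnorm_aρV : ‖aρ * V‖ < 1 := by
        have h1 : ‖aρ * V‖ ≤ ‖aρ‖ * ‖V‖ := norm_mul_le _ _
        have h2 : ‖aρ‖ = ρ := by
          rw [haρ, norm_algebraMap' (adjAlg A K) ρ, Real.norm_of_nonneg hρ0.le]
        have h3 : ρ * ‖V‖ < ε * ‖V‖ := by
          exact mul_lt_mul_of_pos_right hlt hVpos
        have h4 : ε * ‖V‖ ≤ (2 * ‖V‖)⁻¹ * ‖V‖ := by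
          have := min_le_right (m * m / 2) ((2 * ‖V‖)⁻¹)
          exact mul_le_mul_of_nonneg_right this (norm_nonneg _)
        have h5 : (2 * ‖V‖)⁻¹ * ‖V‖ = 1 / 2 := by
          rw [mul_inv, mul_assoc, inv_mul_cancel₀ hVpos.ne', mul_one]
          norm_num
        rw [h2] at h1
        linarith
      have hone : IsUnit (1 - aρ * V) := (Units.oneSub (aρ * V) hnorm_aρV).isUnit
      have hfac : S * (1 - aρ * V) = S - aρ := by
        have hcomm0 : S * aρ = aρ * S := (Algebra.commutes ρ S).symm
        have hcomm : S * (aρ * V) = aρ * (S * V) := by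
          rw [← mul_assoc, hcomm0, mul_assoc]
        rw [mul_sub, mul_one, hcomm, hSV, mul_one]
      have hunit : IsUnit (S - aρ) := by
        rw [← hfac]
        exact IsUnit.mul ⟨u, hu⟩ hone
      have : algebraMap ℝ (adjAlg A K) ρ - S = -(S - aρ) := by rw [haρ, neg_sub]
      rw [this]
      exact hunit.neg
  -- now use the continuous functional calculus to extract a square root of `S - ε`
  set f : ℝ → ℝ := fun ρ => Real.sqrt (ρ - ε) with hf
  set c : adjAlg A K := cfc f S with hc
  have hcsa : IsSelfAdjoint c := cfc_predicate f S
  have hmul : c * c = S - algebraMap ℝ (adjAlg A K) ε := by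
    rw [hc, ← cfc_mul f f S (by fun_prop) (by fun_prop)]
    have h1 : cfc (fun ρ => f ρ * f ρ) S = cfc (fun ρ : ℝ => ρ - ε) S := by
      apply cfc_congr
      intro ρ hρ
      exact Real.mul_self_sqrt (sub_nonneg.mpr (hspec ρ hρ))
    rw [h1, cfc_sub (fun ρ : ℝ => ρ) (fun _ : ℝ => ε) S (by fun_prop) (by fun_prop),
      cfc_id' ℝ S, cfc_const ε S]
  have hcpair : AdjPair_s15 (A := A) c.1 c.1 := by
    have h1 := star_pair c
    rw [hcsa.star_eq] at h1
    exact h1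
  refine ⟨ε, hε, fun x => ?_⟩
  have key : (0 : A) ≤ ⟪Ts x, Ts x⟫ - ε • ⟪x, x⟫ := by
    have h2 : (0 : A) ≤ ⟪c.1 x, c.1 x⟫ := CStarModuleRight.inner_self_nonneg
    have h3 : ⟪c.1 x, c.1 x⟫ = ⟪x, (c * c).1 x⟫ := by
      rw [hcpair x (c.1 x)]
      rfl
    have h4 : ((c * c).1 : K →L[ℂ] K) x = S.1 x - (ε : ℂ) • x := by
      rw [hmul]
      show S.1 x - ((algebraMap ℝ (adjAlg A K) ε) : K →L[ℂ] K) x = _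
      rw [algebraMap_real_val_apply]
    rw [h3, h4, CStarModuleRight.inner_sub_right, hinner', inner_smul_right_complex,
      Complex.coe_smul] at h2
    exact h2
  exact sub_nonneg.mp key

end adjAlg

section easy

variable {H : Type*} [NormedAddCommGroup H] [NormedSpace ℂ H] [SMul Aᵐᵒᵖ H]
  [CStarModuleRight A H] [CompleteSpace H]

lemma norm_bound_of_surjective (T : H →L[ℂ] K) (Ts : K →L[ℂ] H)
    (hT : ∀ (x : H) (y : K), inner (𝕜 := A) (T x) y = inner (𝕜 := A) x (Ts y))
    (hsurj : Function.Surjective T) :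
    ∃ m : ℝ, 0 < m ∧ ∀ x : K, m * ‖x‖ ≤ ‖Ts x‖ := by
  obtain ⟨C, hC, hpre⟩ := T.exists_preimage_norm_le hsurj
  refine ⟨C⁻¹, by positivity, fun x => ?_⟩
  obtain ⟨h, hTh, hnh⟩ := hpre x
  rcases eq_or_ne x 0 with rfl | hx
  · simp
  · have hxp : 0 < ‖x‖ := norm_pos_iff.mpr hx
    have h1 : ‖x‖ ^ 2 = ‖⟪x, x⟫‖ := norm_sq_eq
    have h2 : ⟪x, x⟫ = ⟪h, Ts x⟫ := by rw [← hTh, hT]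
    have h3 : ‖⟪h, Ts x⟫‖ ≤ ‖h‖ * ‖Ts x‖ := norm_inner_le H
    have h4 : ‖h‖ * ‖Ts x‖ ≤ C * ‖x‖ * ‖Ts x‖ := by
      have := norm_nonneg (Ts x)
      exact mul_le_mul_of_nonneg_right hnh this
    have h5 : ‖x‖ ^ 2 ≤ C * ‖x‖ * ‖Ts x‖ := by
      rw [h1, h2]
      exact h3.trans h4
    have h6 : ‖x‖ ≤ C * ‖Ts x‖ := by nlinarith
    calc C⁻¹ * ‖x‖ ≤ C⁻¹ * (C * ‖Ts x‖) := by gcongr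
      _ = ‖Ts x‖ := by field_simp

lemma norm_bound_of_inner_bound (Ts : K →L[ℂ] H) {m' : ℝ} (hm' : 0 < m')
    (hbd : ∀ x : K, m' • inner (𝕜 := A) x x ≤ inner (𝕜 := A) (Ts x) (Ts x)) :
    ∃ m : ℝ, 0 < m ∧ ∀ x : K, m * ‖x‖ ≤ ‖Ts x‖ := by
  refine ⟨Real.sqrt m', Real.sqrt_pos.mpr hm', fun x => ?_⟩
  set s : ℝ := Real.sqrt m' with hs
  have hss : s * s = m' := Real.mul_self_sqrt hm'.le
  have h1 : m' • (inner (𝕜 := A) x x) = inner (𝕜 := A) (s • x) (s • x) := by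
    rw [inner_smul_left_real, inner_smul_right_real, smul_smul, hss]
  have h2 : (0 : A) ≤ m' • (inner (𝕜 := A) x x) := by
    rw [h1]
    exact CStarModuleRight.inner_self_nonneg
  have h3 : ‖m' • (inner (𝕜 := A) x x)‖ ≤ ‖inner (𝕜 := A) (Ts x) (Ts x)‖ :=
    CStarAlgebra.norm_le_norm_of_nonneg_of_le h2 (hbd x)
  have h4 : ‖m' • (inner (𝕜 := A) x x)‖ = m' * ‖x‖ ^ 2 := by
    rw [h1, ← norm_sq_eq, norm_smul, Real.norm_of_nonneg (Real.sqrt_pos.mpr hm').le, mul_pow,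
      ← hs]
    rw [show s ^ 2 = s * s from sq s, hss]
  have h5 : ‖inner (𝕜 := A) (Ts x) (Ts x)‖ = ‖Ts x‖ ^ 2 := norm_sq_eq.symm
  rw [h4, h5] at h3
  have h6 : (s * ‖x‖) ^ 2 ≤ ‖Ts x‖ ^ 2 := by
    rw [mul_pow]
    calc s ^ 2 * ‖x‖ ^ 2 = m' * ‖x‖ ^ 2 := by rw [show s ^ 2 = s * s from sq s, hss]
      _ ≤ ‖Ts x‖ ^ 2 := h3
  have h7 : 0 ≤ s * ‖x‖ := by positivity
  nlinarith [norm_nonneg (Ts x)]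

end easy



end Adj


/-- For an adjointable operator `T : H → K` between Hilbert C⋆-modules,
surjectivity of `T` is equivalent to `T*` being bounded below with respect to the
`A`-valued inner product, and also to `T*` being bounded below in norm. -/
theorem stmt15
    {A : Type*} [CStarAlgebra A] [PartialOrder A] [StarOrderedRing A]
    {H : Type*} [NormedAddCommGroup H] [NormedSpace ℂ H] [SMul Aᵐᵒᵖ H]
    [CStarModuleRight A H] [CompleteSpace H]
    {K : Type*} [NormedAddCommGroup K] [NormedSpace ℂ K] [SMul Aᵐᵒᵖ K]
    [CStarModuleRight A K] [CompleteSpace K]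
    (T : H →L[ℂ] K) (Ts : K →L[ℂ] H)
    (hT : ∀ (x : H) (y : K), inner (𝕜 := A) (T x) y = inner (𝕜 := A) x (Ts y)) :
    (Function.Surjective T ↔
      ∃ m' : ℝ, 0 < m' ∧ ∀ x : K, m' • inner (𝕜 := A) x x ≤ inner (𝕜 := A) (Ts x) (Ts x)) ∧
    (Function.Surjective T ↔
      ∃ m : ℝ, 0 < m ∧ ∀ x : K, m * ‖x‖ ≤ ‖Ts x‖) := by
  rcases subsingleton_or_nontrivial K with hK | hK
  · have hsurj : Function.Surjective T := fun y => ⟨0, Subsingleton.elim _ _⟩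
    have h1 : ∀ x : K, (1 : ℝ) • inner (𝕜 := A) x x ≤ inner (𝕜 := A) (Ts x) (Ts x) := by
      intro x
      rw [Subsingleton.elim x 0]
      simp [CStarModuleRight.inner_zero_left]
    have h2 : ∀ x : K, (1 : ℝ) * ‖x‖ ≤ ‖Ts x‖ := by
      intro x
      rw [Subsingleton.elim x 0]
      simp
    exact ⟨⟨fun _ => ⟨1, one_pos, h1⟩, fun _ => hsurj⟩,
      ⟨fun _ => ⟨1, one_pos, h2⟩, fun _ => hsurj⟩⟩
  · refine ⟨⟨?_, ?_⟩, ⟨?_, ?_⟩⟩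
    · intro hsurj
      obtain ⟨m, hm, hb⟩ := norm_bound_of_surjective T Ts hT hsurj
      obtain ⟨-, m', hm', hbd⟩ := adjAlg.main_aux T Ts hT hm hb
      exact ⟨m', hm', hbd⟩
    · rintro ⟨m', hm', hbd⟩
      obtain ⟨m, hm, hb⟩ := norm_bound_of_inner_bound Ts hm' hbd
      exact (adjAlg.main_aux T Ts hT hm hb).1
    · intro hsurj
      exact norm_bound_of_surjective T Ts hT hsurj
    · rintro ⟨m, hm, hb⟩
      exact (adjAlg.main_aux T Ts hT hm hb).1
end
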